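/- arXiv:1112.5138 — 4 statements merged into one kernel-verified Lean document; each statement's English description precedes it below -/
import Mathlib

section
/- Let Ω ⊂ ℂⁿ be a bounded domain with smooth boundary which is convex. Then there exists an open neighborhood U of bΩ such that the signed distance function δ is a convex function on U ∩ Ω, i.e. its real Hessian satisfies H_δ(z)(V,V) ≥ 0 for all z ∈ U ∩ Ω and all V ∈ ℂⁿ. -/
noncomputable section

open Complex Metric Set
open scoped Classical RealInnerProductSpace

/-- Signed distance to the boundary of `Ω`: negative inside `Ω`, positive outside. -/
def sdist {n : ℕ} (Ω : Set (EuclideanSpace ℂ (Fin n))) (z : EuclideanSpace ℂ (Fin n)) : ℝ :=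
  if z ∈ Ω then -Metric.infDist z (frontier Ω) else Metric.infDist z (frontier Ω)

/-- `⟨∂f(p),V⟩ = Σ_k f_{z_k}(p) V_k`, the complex gradient pairing. -/
def dDir {n : ℕ} (f : EuclideanSpace ℂ (Fin n) → ℂ) (p V : EuclideanSpace ℂ (Fin n)) : ℂ :=
  (1/2 : ℂ) * (fderiv ℝ f p V - Complex.I * fderiv ℝ f p (Complex.I • V))

/-- `Σ_k f_{z̄_k}(p) conj (V_k)`, the conjugate gradient pairing. -/
def dbarDir {n : ℕ} (f : EuclideanSpace ℂ (Fin n) → ℂ) (p V : EuclideanSpace ℂ (Fin n)) : ℂ :=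
  (1/2 : ℂ) * (fderiv ℝ f p V + Complex.I * fderiv ℝ f p (Complex.I • V))

/-- Complex Hessian `L_f(p)(V,W) = Σ_{j,k} ∂²f/∂z_j∂z̄_k(p) V_j conj (W_k)`. -/
def cHess {n : ℕ} (f : EuclideanSpace ℂ (Fin n) → ℂ) (p V W : EuclideanSpace ℂ (Fin n)) : ℂ :=
  dDir (fun z => dbarDir f z W) p V

/-- Real Hessian `H_f(p)(V,W) = Σ_{j,k} ∂²f/∂x_j∂x_k(p) V_j W_k` in the underlying
real coordinates of `ℂⁿ ≅ ℝ^{2n}`. -/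
def rHess {n : ℕ} (f : EuclideanSpace ℂ (Fin n) → ℝ) (p V W : EuclideanSpace ℂ (Fin n)) : ℝ :=
  fderiv ℝ (fun z => fderiv ℝ f z W) p V

/-- `Ω ⊂ ℂⁿ` has smooth (`C^∞`) boundary: the signed distance function is smooth on an
open neighborhood of `frontier Ω` and has unit gradient there. -/
def HasSmoothBoundary {n : ℕ} (Ω : Set (EuclideanSpace ℂ (Fin n))) : Prop :=
  ∃ U : Set (EuclideanSpace ℂ (Fin n)), IsOpen U ∧ frontier Ω ⊆ U ∧
    ContDiffOn ℝ (⊤ : ℕ∞) (sdist Ω) U ∧ ∀ z ∈ U, ‖fderiv ℝ (sdist Ω) z‖ = 1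

/-! ### Auxiliary material -/

section Aux

variable {E' G : Type*} [NormedAddCommGroup E'] [NormedSpace ℝ E'] [NormedAddCommGroup G]
  [NormedSpace ℝ G]

/-- Evaluation of the derivative of a `CLM`-valued map at a fixed vector. -/
lemma fderiv_eval_const {F : E' → E' →L[ℝ] G} {w : E'} (hF : DifferentiableAt ℝ F w) (x y : E') :
    fderiv ℝ (fun z => F z y) w x = (fderiv ℝ F w x) y := by
  have h : HasFDerivAt (fun z => F z y)
      ((ContinuousLinearMap.apply ℝ G y).comp (fderiv ℝ F w)) w :=
    (ContinuousLinearMap.apply ℝ G y).hasFDerivAt.comp w hF.hasFDerivAt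
  rw [h.fderiv]; rfl

variable {F : Type*} [NormedAddCommGroup F] [InnerProductSpace ℝ F] [CompleteSpace F]

/-- The inverse of the Riesz isomorphism, as a genuinely `ℝ`-linear continuous equivalence. -/
def rdualCLE : StrongDual ℝ F ≃L[ℝ] F :=
  LinearEquiv.toContinuousLinearEquivOfContinuous
    { toFun := fun φ => (InnerProductSpace.toDual ℝ F).symm φ
      invFun := fun x => InnerProductSpace.toDual ℝ F x
      map_add' := fun a b => by simp
      map_smul' := fun c φ => by
        simpa using (InnerProductSpace.toDual ℝ F).symm.map_smulₛₗ c φ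
      left_inv := fun φ => by simp
      right_inv := fun x => by simp }
    ((InnerProductSpace.toDual ℝ F).symm.continuous)

lemma rdualCLE_inner (φ : StrongDual ℝ F) (y : F) : ⟪rdualCLE φ, y⟫ = φ y :=
  InnerProductSpace.toDual_symm_apply

lemma rdualCLE_norm (φ : StrongDual ℝ F) : ‖(rdualCLE (F := F)) φ‖ = ‖φ‖ :=
  (InnerProductSpace.toDual ℝ F).symm.norm_map φ

end Aux

/-- The ambient space `ℂⁿ`. -/
private abbrev Esp (n : ℕ) := EuclideanSpace ℂ (Fin n)

set_option maxHeartbeats 1000000 in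
/-- If `Ω` is a smoothly bounded convex domain, then the signed distance function `δ` is
convex on `U ∩ Ω` for some neighborhood `U` of `bΩ`. -/
theorem signed_distance_convex_inside {n : ℕ} (Ω : Set (EuclideanSpace ℂ (Fin n)))
    (hopen : IsOpen Ω) (hconn : IsConnected Ω) (hbdd : Bornology.IsBounded Ω)
    (hsmooth : HasSmoothBoundary Ω)
    (hconv : ∀ p ∈ frontier Ω, ∀ V : EuclideanSpace ℂ (Fin n),
      fderiv ℝ (sdist Ω) p V = 0 → 0 ≤ rHess (sdist Ω) p V V) :
    ∃ U : Set (EuclideanSpace ℂ (Fin n)), IsOpen U ∧ frontier Ω ⊆ U ∧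
      ∀ z ∈ U ∩ Ω, ∀ V : EuclideanSpace ℂ (Fin n), 0 ≤ rHess (sdist Ω) z V V := by
  classical
  obtain ⟨U₀, hU₀open, hfrU₀, hsm, hnorm1⟩ := hsmooth
  rcases eq_empty_or_nonempty (frontier Ω) with hfe | hfne
  · exact ⟨∅, isOpen_empty, by simp [hfe], by simp⟩
  set d : Esp n → ℝ := sdist Ω with hd
  -- cast gymnastics
  have hle1 : ((⊤ : ℕ∞) : WithTop ℕ∞) ≠ 0 := by simp
  have hle2 : minSmoothness ℝ 2 ≤ ((⊤ : ℕ∞) : WithTop ℕ∞) := by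
    rw [minSmoothness_of_isRCLikeNormedField]; decide
  have hlet : ((⊤ : ℕ∞) : WithTop ℕ∞) + 1 ≤ ((⊤ : ℕ∞) : WithTop ℕ∞) := by decide
  -- basic differentiability facts
  have hdat : ∀ w ∈ U₀, DifferentiableAt ℝ d w := fun w hw =>
    ((hsm.contDiffAt (hU₀open.mem_nhds hw)).differentiableAt hle1)
  have hd1 : ContDiffOn ℝ (⊤ : ℕ∞) (fderiv ℝ d) U₀ := hsm.fderiv_of_isOpen hU₀open hlet
  have hd1at : ∀ w ∈ U₀, DifferentiableAt ℝ (fderiv ℝ d) w := fun w hw =>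
    ((hd1.contDiffAt (hU₀open.mem_nhds hw)).differentiableAt hle1)
  have hd2 : ContDiffOn ℝ (⊤ : ℕ∞) (fderiv ℝ (fderiv ℝ d)) U₀ :=
    hd1.fderiv_of_isOpen hU₀open hlet
  have hd2at : ∀ w ∈ U₀, DifferentiableAt ℝ (fderiv ℝ (fderiv ℝ d)) w := fun w hw =>
    ((hd2.contDiffAt (hU₀open.mem_nhds hw)).differentiableAt hle1)
  -- the gradient field
  set g : (Esp n) → (Esp n) := fun w => rdualCLE (fderiv ℝ d w) with hgdef
  have hginner : ∀ (w y : (Esp n)), ⟪g w, y⟫ = fderiv ℝ d w y := fun w y => rdualCLE_inner _ y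
  have hgnorm : ∀ w ∈ U₀, ‖g w‖ = 1 := fun w hw => by
    rw [hgdef]; rw [rdualCLE_norm]; exact hnorm1 w hw
  have hgsmooth : ContDiffOn ℝ (⊤ : ℕ∞) g U₀ :=
    (rdualCLE.toContinuousLinearMap.contDiff).comp_contDiffOn hd1
  have hgat : ∀ w ∈ U₀, DifferentiableAt ℝ g w := fun w hw =>
    ((hgsmooth.contDiffAt (hU₀open.mem_nhds hw)).differentiableAt hle1)
  -- the Hessian operator
  set A : (Esp n) → (Esp n) →L[ℝ] (Esp n) := fun w => fderiv ℝ g w with hAdef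
  have hAsmooth : ContDiffOn ℝ (⊤ : ℕ∞) A U₀ := hgsmooth.fderiv_of_isOpen hU₀open hlet
  have hAat : ∀ (V : (Esp n)), ∀ w ∈ U₀, DifferentiableAt ℝ (fun z => A z V) w := fun V w hw =>
    (((ContinuousLinearMap.apply ℝ (Esp n) V).contDiff.comp_contDiffOn hAsmooth).contDiffAt
      (hU₀open.mem_nhds hw)).differentiableAt hle1
  -- bridge to the second derivative
  have hbridge : ∀ w ∈ U₀, ∀ x y : (Esp n), ⟪A w x, y⟫ = fderiv ℝ (fun z => fderiv ℝ d z y) w x := by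
    intro w hw x y
    have h1 : (fun z => fderiv ℝ d z y) = fun z => ⟪g z, y⟫ := funext fun z => (hginner z y).symm
    rw [h1, fderiv_inner_apply ℝ (hgat w hw) (differentiableAt_const y) x]
    simp [hAdef]
  have hbridge2 : ∀ w ∈ U₀, ∀ x y : (Esp n), ⟪A w x, y⟫ = fderiv ℝ (fderiv ℝ d) w x y := by
    intro w hw x y
    rw [hbridge w hw x y, fderiv_eval_const (hd1at w hw)]
  have hrHess : ∀ w ∈ U₀, ∀ x y : (Esp n), rHess (sdist Ω) w x y = ⟪A w x, y⟫ := by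
    intro w hw x y
    rw [hbridge w hw x y]; rfl
  -- symmetry of A
  have hsymmA : ∀ w ∈ U₀, ∀ x y : (Esp n), ⟪A w x, y⟫ = ⟪A w y, x⟫ := by
    intro w hw x y
    rw [hbridge2 w hw x y, hbridge2 w hw y x]
    exact (hsm.contDiffAt (hU₀open.mem_nhds hw)).isSymmSndFDerivAt hle2 x y
  -- the gradient is in the kernel of A
  have hker : ∀ w ∈ U₀, ∀ y : (Esp n), ⟪g w, A w y⟫ = 0 := by
    intro w hw y
    have hone : ∀ z ∈ U₀, ⟪g z, g z⟫ = (1 : ℝ) := fun z hz => by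
      rw [real_inner_self_eq_norm_sq, hgnorm z hz]; norm_num
    have hev : (fun z => ⟪g z, g z⟫) =ᶠ[nhds w] fun _ => (1 : ℝ) :=
      Filter.eventually_of_mem (hU₀open.mem_nhds hw) hone
    have h0 : fderiv ℝ (fun z => ⟪g z, g z⟫) w = 0 := by
      rw [hev.fderiv_eq]; exact fderiv_const_apply 1
    have h1 := fderiv_inner_apply ℝ (hgat w hw) (hgat w hw) y
    rw [h0] at h1
    simp only [ContinuousLinearMap.zero_apply] at h1
    have h2 : (⟪A w y, g w⟫ : ℝ) = ⟪g w, A w y⟫ := real_inner_comm _ _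
    have h1' : (0 : ℝ) = ⟪g w, A w y⟫ + ⟪A w y, g w⟫ := h1
    linarith [h1', h2]
  have hkerg : ∀ w ∈ U₀, A w (g w) = 0 := by
    intro w hw
    have h : ∀ y : (Esp n), ⟪A w (g w), y⟫ = 0 := fun y => by
      rw [hsymmA w hw (g w) y, real_inner_comm]; exact hker w hw y
    have := h (A w (g w))
    exact inner_self_eq_zero.mp this
  have hkerfun : ∀ w ∈ U₀, ∀ V : (Esp n), ⟪A w V, g w⟫ = 0 := fun w hw V => by
    rw [real_inner_comm]; exact hker w hw V
  -- the differentiated kernel identity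
  have hI1 : ∀ w ∈ U₀, ∀ a V : (Esp n),
      ⟪fderiv ℝ (fun z => A z V) w a, g w⟫ = -⟪A w V, A w a⟫ := by
    intro w hw a V
    have hFz : ∀ z ∈ U₀, ⟪A z V, g z⟫ = (0 : ℝ) := fun z hz => hkerfun z hz V
    have hev : (fun z => ⟪A z V, g z⟫) =ᶠ[nhds w] fun _ => (0 : ℝ) :=
      Filter.eventually_of_mem (hU₀open.mem_nhds hw) hFz
    have h0 : fderiv ℝ (fun z => ⟪A z V, g z⟫) w = 0 := by
      rw [hev.fderiv_eq]; exact fderiv_const_apply 0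
    have h1 := fderiv_inner_apply ℝ (hAat V w hw) (hgat w hw) a
    rw [h0] at h1
    simp only [ContinuousLinearMap.zero_apply] at h1
    have h1' : (0 : ℝ) = ⟪A w V, A w a⟫
        + ⟪fderiv ℝ (fun z => A z V) w a, g w⟫ := h1
    linarith [h1']
  -- third derivative and its symmetries
  set T3 : (Esp n) → (Esp n) →L[ℝ] (Esp n) →L[ℝ] (Esp n) →L[ℝ] ℝ := fun w => fderiv ℝ (fderiv ℝ (fderiv ℝ d)) w
    with hT3def
  have heval2 : ∀ w ∈ U₀, ∀ a b c : (Esp n),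
      fderiv ℝ (fun z => fderiv ℝ (fderiv ℝ d) z b c) w a = T3 w a b c := by
    intro w hw a b c
    have hb : DifferentiableAt ℝ (fun z => fderiv ℝ (fderiv ℝ d) z b) w := by
      exact (hd2at w hw).clm_apply (differentiableAt_const b)
    calc fderiv ℝ (fun z => fderiv ℝ (fderiv ℝ d) z b c) w a
        = (fderiv ℝ (fun z => fderiv ℝ (fderiv ℝ d) z b) w a) c := fderiv_eval_const hb a c
      _ = ((fderiv ℝ (fderiv ℝ (fderiv ℝ d)) w a) b) c := by
          rw [fderiv_eval_const (hd2at w hw) a b]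
      _ = T3 w a b c := rfl
  have hT3a : ∀ w ∈ U₀, ∀ a V c : (Esp n),
      ⟪fderiv ℝ (fun z => A z V) w a, c⟫ = T3 w a V c := by
    intro w hw a V c
    have h1 : fderiv ℝ (fun z => ⟪A z V, c⟫) w a = ⟪fderiv ℝ (fun z => A z V) w a, c⟫ := by
      rw [fderiv_inner_apply ℝ (hAat V w hw) (differentiableAt_const c) a]
      simp
    have hev : (fun z => ⟪A z V, c⟫) =ᶠ[nhds w] fun z => fderiv ℝ (fderiv ℝ d) z V c :=
      Filter.eventually_of_mem (hU₀open.mem_nhds hw) fun z hz => hbridge2 z hz V c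
    rw [← h1, hev.fderiv_eq, heval2 w hw a V c]
  have hT3sym23 : ∀ w ∈ U₀, ∀ a b c : (Esp n), T3 w a b c = T3 w a c b := by
    intro w hw a b c
    have hev : (fun z => fderiv ℝ (fderiv ℝ d) z b c) =ᶠ[nhds w]
        fun z => fderiv ℝ (fderiv ℝ d) z c b :=
      Filter.eventually_of_mem (hU₀open.mem_nhds hw) fun z hz =>
        (hsm.contDiffAt (hU₀open.mem_nhds hz)).isSymmSndFDerivAt hle2 b c
    rw [← heval2 w hw a b c, hev.fderiv_eq, heval2 w hw a c b]
  have hT3sym12 : ∀ w ∈ U₀, ∀ a b c : (Esp n), T3 w a b c = T3 w b a c := by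
    intro w hw a b c
    set hc : (Esp n) → (Esp n) →L[ℝ] ℝ := fun z => fderiv ℝ (fun z' => fderiv ℝ d z' c) z with hcdef
    have hcsm : ContDiffOn ℝ (⊤ : ℕ∞) (fun z' => fderiv ℝ d z' c) U₀ :=
      (ContinuousLinearMap.apply ℝ ℝ c).contDiff.comp_contDiffOn hd1
    have hcsm1 : ContDiffOn ℝ (⊤ : ℕ∞) hc U₀ := hcsm.fderiv_of_isOpen hU₀open hlet
    have hc1at : ∀ z ∈ U₀, DifferentiableAt ℝ hc z := fun z hz =>
      ((hcsm1.contDiffAt (hU₀open.mem_nhds hz)).differentiableAt hle1)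
    have hclaim : ∀ z ∈ U₀, ∀ x : (Esp n), fderiv ℝ (fderiv ℝ d) z x c = hc z x := by
      intro z hz x
      rw [hcdef]
      exact (fderiv_eval_const (hd1at z hz) x c).symm
    have hevb : (fun z => fderiv ℝ (fderiv ℝ d) z b c) =ᶠ[nhds w] fun z => hc z b :=
      Filter.eventually_of_mem (hU₀open.mem_nhds hw) fun z hz => hclaim z hz b
    have heva : (fun z => fderiv ℝ (fderiv ℝ d) z a c) =ᶠ[nhds w] fun z => hc z a :=
      Filter.eventually_of_mem (hU₀open.mem_nhds hw) fun z hz => hclaim z hz a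
    have hsymc : IsSymmSndFDerivAt ℝ (fun z' => fderiv ℝ d z' c) w :=
      (hcsm.contDiffAt (hU₀open.mem_nhds hw)).isSymmSndFDerivAt hle2
    calc T3 w a b c = fderiv ℝ (fun z => fderiv ℝ (fderiv ℝ d) z b c) w a :=
          (heval2 w hw a b c).symm
      _ = fderiv ℝ (fun z => hc z b) w a := by rw [hevb.fderiv_eq]
      _ = (fderiv ℝ hc w a) b := fderiv_eval_const (hc1at w hw) a b
      _ = (fderiv ℝ hc w b) a := hsymc a b
      _ = fderiv ℝ (fun z => hc z a) w b := (fderiv_eval_const (hc1at w hw) b a).symm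
      _ = fderiv ℝ (fun z => fderiv ℝ (fderiv ℝ d) z a c) w b := by rw [heva.fderiv_eq]
      _ = T3 w b a c := heval2 w hw b a c
  -- choose the tubular neighborhood
  have hfrcl : IsClosed (frontier Ω) := isClosed_frontier
  have hfrcp : IsCompact (frontier Ω) :=
    Metric.isCompact_of_isClosed_isBounded hfrcl
      ((hbdd.closure).subset (frontier_subset_closure))
  obtain ⟨ε', hε'pos, hthick⟩ := hfrcp.exists_thickening_subset_open hU₀open hfrU₀
  set ε := ε' / 2 with hεdef
  have hεpos : 0 < ε := by positivity
  refine ⟨thickening ε (frontier Ω), isOpen_thickening,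
    self_subset_thickening hεpos _, ?_⟩
  rintro z ⟨hzU, hzΩ⟩ V
  have hsubU₀ : thickening (2 * ε) (frontier Ω) ⊆ U₀ := by
    rw [show (2 : ℝ) * ε = ε' by rw [hεdef]; ring]
    exact hthick
  have hzU₀ : z ∈ U₀ := hsubU₀ ((thickening_mono (by linarith) _) hzU)
  set T := infDist z (frontier Ω) with hTdef
  have hTlt : T < ε := (mem_thickening_iff_infDist_lt hfne).mp hzU
  have hzf : z ∉ frontier Ω := fun h => h.2 (by rwa [hopen.interior_eq])
  have hT0 : (0 : ℝ) < T := (hfrcl.notMem_iff_infDist_pos hfne).mp hzf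
  have hdz : d z = -T := by rw [hd]; exact if_pos hzΩ
  set N := g z with hNdef
  have hNnorm : ‖N‖ = 1 := hgnorm z hzU₀
  set γ : ℝ → (Esp n) := fun t => z + t • N with hγdef
  have hγ0 : γ 0 = z := by simp [hγdef]
  have hγU₀ : ∀ t : ℝ, |t| < 2 * ε - T → γ t ∈ U₀ := by
    intro t ht
    apply hsubU₀
    rw [mem_thickening_iff_infDist_lt hfne]
    have h1 : infDist (γ t) (frontier Ω) ≤ infDist z (frontier Ω) + dist (γ t) z :=
      infDist_le_infDist_add_dist
    have h2 : dist (γ t) z = |t| := by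
      rw [hγdef]
      simp [dist_eq_norm, norm_smul, hNnorm]
    rw [h2, ← hTdef] at h1
    linarith
  set J : Set ℝ := Ioo (T - 2 * ε) (2 * ε - T) with hJdef
  have hJU₀ : ∀ t ∈ J, γ t ∈ U₀ := by
    intro t ht
    exact hγU₀ t (abs_lt.mpr ⟨by linarith [ht.1], ht.2⟩)
  have hIccJ : Icc (0 : ℝ) T ⊆ J := fun t ht =>
    ⟨by linarith [ht.1], by linarith [ht.2]⟩
  have hIccU₀ : ∀ t ∈ Icc (0 : ℝ) T, γ t ∈ U₀ := fun t ht => hJU₀ t (hIccJ ht)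
  have hγderiv : ∀ t : ℝ, HasDerivAt γ N t := by
    intro t
    have h : HasDerivAt (fun s : ℝ => s • N) ((1 : ℝ) • N) t :=
      (hasDerivAt_id t).smul_const N
    rw [one_smul] at h
    exact h.const_add z
  have hγcont : Continuous γ := by
    rw [hγdef]; exact continuous_const.add (continuous_id.smul continuous_const)
  -- G is locally constant along the normal line: Gronwall-type argument
  set G : ℝ → (Esp n) := fun t => g (γ t) with hGdef
  have hGderiv : ∀ t ∈ J, HasDerivAt G (A (γ t) N) t := fun t ht =>
    ((hgat (γ t) (hJU₀ t ht)).hasFDerivAt).comp_hasDerivAt t (hγderiv t)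
  -- uniform bound for A on the segment
  have hKcp : IsCompact (γ '' Icc (0 : ℝ) T) := (isCompact_Icc).image hγcont
  obtain ⟨C₀, hC₀⟩ := hKcp.exists_bound_of_continuousOn
    (hAsmooth.continuousOn.mono (by rintro w ⟨t, ht, rfl⟩; exact hIccU₀ t ht))
  set C : ℝ := max C₀ 0 with hCdef
  have hCn : 0 ≤ C := le_max_right _ _
  have hCb : ∀ t ∈ Icc (0 : ℝ) T, ‖A (γ t)‖ ≤ C := fun t ht =>
    le_trans (hC₀ (γ t) ⟨t, ht, rfl⟩) (le_max_left _ _)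
  set u : ℝ → ℝ := fun t => ⟪G t - N, G t - N⟫ with hudef
  have huderiv : ∀ t ∈ J, HasDerivAt u
      (⟪G t - N, A (γ t) N⟫ + ⟪A (γ t) N, G t - N⟫) t := by
    intro t ht
    exact HasDerivAt.inner ℝ ((hGderiv t ht).sub_const N) ((hGderiv t ht).sub_const N)
  have huname : ∀ t, u t = ‖G t - N‖ ^ 2 := fun t => real_inner_self_eq_norm_sq _
  have hubound : ∀ t ∈ Icc (0 : ℝ) T,
      ⟪G t - N, A (γ t) N⟫ + ⟪A (γ t) N, G t - N⟫ ≤ 2 * C * u t := by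
    intro t ht
    have hkert : A (γ t) (G t) = 0 := hkerg (γ t) (hIccU₀ t ht)
    have hAN : A (γ t) N = A (γ t) (N - G t) := by
      rw [map_sub, hkert, sub_zero]
    have hnrm : ‖A (γ t) (N - G t)‖ ≤ C * ‖G t - N‖ := by
      calc ‖A (γ t) (N - G t)‖ ≤ ‖A (γ t)‖ * ‖N - G t‖ :=
            (A (γ t)).le_opNorm _
        _ ≤ C * ‖N - G t‖ := by
            apply mul_le_mul_of_nonneg_right (hCb t ht) (norm_nonneg _)
        _ = C * ‖G t - N‖ := by rw [norm_sub_rev]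
    have h1 : ⟪G t - N, A (γ t) N⟫ ≤ C * u t := by
      rw [hAN]
      calc ⟪G t - N, A (γ t) (N - G t)⟫ ≤ ‖G t - N‖ * ‖A (γ t) (N - G t)‖ :=
            real_inner_le_norm _ _
        _ ≤ ‖G t - N‖ * (C * ‖G t - N‖) := by
            apply mul_le_mul_of_nonneg_left hnrm (norm_nonneg _)
        _ = C * ‖G t - N‖ ^ 2 := by ring
        _ = C * u t := by rw [huname]
    have h2 : ⟪A (γ t) N, G t - N⟫ ≤ C * u t := by
      rw [real_inner_comm]; exact h1
    linarith
  set v : ℝ → ℝ := fun t => u t * Real.exp (-(2 * C) * t) with hvdef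
  have hexpder : ∀ t : ℝ, HasDerivAt (fun s => Real.exp (-(2 * C) * s))
      (Real.exp (-(2 * C) * t) * (-(2 * C))) t := by
    intro t
    have h := ((hasDerivAt_id t).const_mul (-(2 * C))).exp
    simpa [mul_comm] using h
  have hvderiv : ∀ t ∈ J, HasDerivAt v
      ((⟪G t - N, A (γ t) N⟫ + ⟪A (γ t) N, G t - N⟫) * Real.exp (-(2 * C) * t)
        + u t * (Real.exp (-(2 * C) * t) * (-(2 * C)))) t := fun t ht =>
    (huderiv t ht).mul (hexpder t)
  have hvanti : AntitoneOn v (Icc 0 T) := by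
    apply antitoneOn_of_deriv_nonpos (convex_Icc 0 T)
    · intro t ht
      exact ((hvderiv t (hIccJ ht)).continuousAt).continuousWithinAt
    · intro t ht
      rw [interior_Icc] at ht
      exact ((hvderiv t (hIccJ (Ioo_subset_Icc_self ht))).differentiableAt).differentiableWithinAt
    · intro t ht
      rw [interior_Icc] at ht
      have htIcc := Ioo_subset_Icc_self ht
      rw [(hvderiv t (hIccJ htIcc)).deriv]
      have hb := hubound t htIcc
      have hu0 : (0 : ℝ) ≤ u t := real_inner_self_nonneg
      have he : (0 : ℝ) < Real.exp (-(2 * C) * t) := Real.exp_pos _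
      nlinarith
  have hu00 : u 0 = 0 := by
    have hG0 : G 0 = N := by
      show g (γ 0) = N
      rw [hγ0]
    show (⟪G 0 - N, G 0 - N⟫ : ℝ) = 0
    rw [hG0]
    simp
  have hGN : ∀ t ∈ Icc (0 : ℝ) T, G t = N := by
    intro t ht
    have h0mem : (0 : ℝ) ∈ Icc (0 : ℝ) T := ⟨le_refl _, hT0.le⟩
    have hv0 : v t ≤ v 0 := hvanti h0mem ht ht.1
    have hv00 : v 0 = 0 := by simp [hvdef, hu00]
    have he : (0 : ℝ) < Real.exp (-(2 * C) * t) := Real.exp_pos _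
    have hut : u t ≤ 0 := by
      by_contra hlt
      push_neg at hlt
      have : 0 < v t := by
        rw [hvdef]
        exact mul_pos hlt he
      linarith
    have hge : (0 : ℝ) ≤ u t := real_inner_self_nonneg
    have huz : u t = 0 := le_antisymm hut hge
    have : G t - N = 0 := inner_self_eq_zero.mp huz
    exact sub_eq_zero.mp this
  -- the signed distance is linear along the normal line
  have hφderiv : ∀ t ∈ Icc (0 : ℝ) T, HasDerivAt (fun s => d (γ s) - s) 0 t := by
    intro t ht
    have h1 : HasDerivAt (fun s => d (γ s)) (fderiv ℝ d (γ t) N) t :=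
      ((hdat (γ t) (hIccU₀ t ht)).hasFDerivAt).comp_hasDerivAt t (hγderiv t)
    have h2 : fderiv ℝ d (γ t) N = 1 := by
      rw [← hginner (γ t) N, show g (γ t) = N from hGN t ht,
        real_inner_self_eq_norm_sq, hNnorm]
      norm_num
    rw [h2] at h1
    have h3 := h1.sub (hasDerivAt_id' t)
    rw [sub_self] at h3
    exact h3
  have hψcont : ContinuousOn (fun s => d (γ s) - s) (Icc 0 T) := fun t ht =>
    ((hφderiv t ht).continuousAt).continuousWithinAt
  have hconst := constant_of_has_deriv_right_zero hψcont
    (fun x hx => ((hφderiv x (Ico_subset_Icc_self hx)).hasDerivWithinAt))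
    T (right_mem_Icc.mpr hT0.le)
  have hdγT : d (γ T) = 0 := by
    have h := hconst
    rw [hγ0, hdz] at h
    linarith
  set p := γ T with hpdef
  have hpfr : p ∈ frontier Ω := by
    have hiz : infDist p (frontier Ω) = 0 := by
      by_cases h : p ∈ Ω
      · have hdp : d p = -infDist p (frontier Ω) := by
          rw [hd]; simp only [sdist]; rw [if_pos h]
        rw [hpdef] at hdp
        rw [hdγT] at hdp
        linarith
      · have hdp : d p = infDist p (frontier Ω) := by
          rw [hd]; simp only [sdist]; rw [if_neg h]
        rw [hpdef] at hdp
        rw [hdγT] at hdp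
        linarith
    exact (hfrcl.mem_iff_infDist_zero hfne).mpr hiz
  have hpU₀ : p ∈ U₀ := hfrU₀ hpfr
  have hgp : g p = N := hGN T (right_mem_Icc.mpr hT0.le)
  -- the Hessian is positive semidefinite at the boundary point p
  have hCpsd : ∀ W : (Esp n), 0 ≤ ⟪A p W, W⟫ := by
    intro W
    set c := (⟪N, W⟫ : ℝ) with hcdef2
    set W' := W - c • N with hW'def
    have hWrec : W = W' + c • N := by rw [hW'def]; abel
    have h0 : fderiv ℝ d p W' = 0 := by
      rw [← hginner p W', hgp, hW'def, inner_sub_right, real_inner_smul_right,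
        real_inner_self_eq_norm_sq, hNnorm, ← hcdef2]
      ring
    have hq := hconv p hpfr W' h0
    rw [hrHess p hpU₀ W' W'] at hq
    have hApN : A p N = 0 := by rw [← hgp]; exact hkerg p hpU₀
    have hAW : A p W = A p W' := by
      rw [hW'def, map_sub, map_smul, hApN, smul_zero, sub_zero]
    have hzero : (⟪A p W', N⟫ : ℝ) = 0 := by
      rw [← hgp]; exact hkerfun p hpU₀ W'
    have hsplit : (⟪A p W', W⟫ : ℝ) = ⟪A p W', W'⟫ + c * ⟪A p W', N⟫ := by
      nth_rewrite 1 [hWrec]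
      rw [inner_add_right, real_inner_smul_right]
    rw [hAW, hsplit, hzero]
    linarith
  -- monotonicity of the Hessian quadratic form along the normal line
  set q : ℝ → ℝ := fun t => ⟪A (γ t) V, V⟫ with hqdef
  have hqderiv : ∀ t ∈ J, HasDerivAt q
      (⟪fderiv ℝ (fun w => A w V) (γ t) N, V⟫) t := by
    intro t ht
    have hAVd : HasDerivAt (fun s => A (γ s) V) (fderiv ℝ (fun w => A w V) (γ t) N) t :=
      ((hAat V (γ t) (hJU₀ t ht)).hasFDerivAt).comp_hasDerivAt t (hγderiv t)
    have h := HasDerivAt.inner ℝ hAVd (hasDerivAt_const t V)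
    simpa only [inner_zero_right, zero_add] using h
  have hqder_nonpos : ∀ t ∈ Icc (0 : ℝ) T,
      (⟪fderiv ℝ (fun w => A w V) (γ t) N, V⟫ : ℝ) ≤ 0 := by
    intro t ht
    have hw := hIccU₀ t ht
    have h1 : (⟪fderiv ℝ (fun w => A w V) (γ t) N, V⟫ : ℝ) = T3 (γ t) N V V :=
      hT3a (γ t) hw N V V
    have h2 : T3 (γ t) N V V = T3 (γ t) V V N := by
      rw [hT3sym12 (γ t) hw N V V, hT3sym23 (γ t) hw V N V]
    have h3 : T3 (γ t) V V N = ⟪fderiv ℝ (fun w => A w V) (γ t) V, N⟫ :=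
      (hT3a (γ t) hw V V N).symm
    have h4 : (⟪fderiv ℝ (fun w => A w V) (γ t) V, N⟫ : ℝ) = -⟪A (γ t) V, A (γ t) V⟫ := by
      rw [show N = g (γ t) from (hGN t ht).symm]
      exact hI1 (γ t) hw V V
    rw [h1, h2, h3, h4]
    have : (0:ℝ) ≤ ⟪A (γ t) V, A (γ t) V⟫ := real_inner_self_nonneg
    linarith
  have hqanti : AntitoneOn q (Icc 0 T) := by
    apply antitoneOn_of_deriv_nonpos (convex_Icc 0 T)
    · intro t ht
      exact (hqderiv t (hIccJ ht)).continuousAt.continuousWithinAt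
    · intro t ht
      rw [interior_Icc] at ht
      exact (hqderiv t (hIccJ (Ioo_subset_Icc_self ht))).differentiableAt.differentiableWithinAt
    · intro t ht
      rw [interior_Icc] at ht
      rw [(hqderiv t (hIccJ (Ioo_subset_Icc_self ht))).deriv]
      exact hqder_nonpos t (Ioo_subset_Icc_self ht)
  have hfinal : q T ≤ q 0 :=
    hqanti ⟨le_refl _, hT0.le⟩ (right_mem_Icc.mpr hT0.le) hT0.le
  have hqT : 0 ≤ q T := hCpsd V
  have hq0 : q 0 = ⟪A z V, V⟫ := by show (⟪A (γ 0) V, V⟫ : ℝ) = _; rw [hγ0]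
  rw [hrHess z hzU₀ V V]
  linarith
end
end

section
/- Let Ω ⊂ ℂⁿ be a bounded domain with smooth boundary which is convex, and let D(z) = dist(z, bΩ)². Then there exists an open neighborhood U of bΩ such that for all z ∈ U ∩ Ω and all V ∈ ℂⁿ, the real Hessian satisfies H_D(z)(V,V) ≤ |⟨∇D(z),V⟩|² / (2 D(z)). -/
noncomputable section

open Complex Metric Set
open scoped Classical RealInnerProductSpace

section Aux

variable {n : ℕ}

/-- The gradient vector field of `f`. -/
def grad (f : EuclideanSpace ℂ (Fin n) → ℝ) (x : EuclideanSpace ℂ (Fin n)) :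
    EuclideanSpace ℂ (Fin n) :=
  (InnerProductSpace.toDual ℝ _).symm (fderiv ℝ f x)

lemma inner_grad (f : EuclideanSpace ℂ (Fin n) → ℝ) (x v : EuclideanSpace ℂ (Fin n)) :
    ⟪grad f x, v⟫ = fderiv ℝ f x v :=
  InnerProductSpace.toDual_symm_apply

lemma norm_grad (f : EuclideanSpace ℂ (Fin n) → ℝ) (x : EuclideanSpace ℂ (Fin n)) :
    ‖grad f x‖ = ‖fderiv ℝ f x‖ :=
  LinearIsometryEquiv.norm_map _ _

variable {f : EuclideanSpace ℂ (Fin n) → ℝ} {U : Set (EuclideanSpace ℂ (Fin n))}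
  {x : EuclideanSpace ℂ (Fin n)}

lemma contDiffAt_of (hU : IsOpen U) (hf : ContDiffOn ℝ (⊤ : ℕ∞) f U) (hx : x ∈ U) :
    ContDiffAt ℝ (⊤ : ℕ∞) f x :=
  hf.contDiffAt (hU.mem_nhds hx)

lemma grad_contDiffAt (hU : IsOpen U) (hf : ContDiffOn ℝ (⊤ : ℕ∞) f U) (hx : x ∈ U) :
    ContDiffAt ℝ (⊤ : ℕ∞) (grad f) x := by
  have h1 : ContDiffAt ℝ (⊤ : ℕ∞) (fderiv ℝ f) x :=
    (contDiffAt_of hU hf hx).fderiv_right (by simp)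
  exact ((InnerProductSpace.toDual ℝ
    (EuclideanSpace ℂ (Fin n))).symm.contDiff.contDiffAt).comp x h1

lemma grad_hasFDerivAt (hU : IsOpen U) (hf : ContDiffOn ℝ (⊤ : ℕ∞) f U) (hx : x ∈ U) :
    HasFDerivAt (grad f) (fderiv ℝ (grad f) x) x :=
  ((grad_contDiffAt hU hf hx).differentiableAt (by simp)).hasFDerivAt

lemma rHess_eq_inner (hU : IsOpen U) (hf : ContDiffOn ℝ (⊤ : ℕ∞) f U) (hx : x ∈ U)
    (v w : EuclideanSpace ℂ (Fin n)) :
    rHess f x v w = ⟪fderiv ℝ (grad f) x v, w⟫ := by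
  have e : (fun z : EuclideanSpace ℂ (Fin n) => fderiv ℝ f z w) = fun z => ⟪grad f z, w⟫ :=
    funext fun z => (inner_grad f z w).symm
  have hG := grad_hasFDerivAt hU hf hx
  have h2 := hG.inner ℝ (hasFDerivAt_const w x)
  rw [rHess, e, h2.fderiv]
  simp [fderivInnerCLM_apply]

lemma rHess_symm (hU : IsOpen U) (hf : ContDiffOn ℝ (⊤ : ℕ∞) f U) (hx : x ∈ U)
    (v w : EuclideanSpace ℂ (Fin n)) :
    rHess f x v w = rHess f x w v := by
  have hsym : IsSymmSndFDerivAt ℝ f x :=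
    (contDiffAt_of hU hf hx).isSymmSndFDerivAt (by rw [minSmoothness_of_isRCLikeNormedField]; exact WithTop.coe_le_coe.2 le_top)
  have hdf : DifferentiableAt ℝ (fderiv ℝ f) x :=
    ((contDiffAt_of hU hf hx).fderiv_right (m := (⊤:ℕ∞)) (by simp)).differentiableAt
      (by simp)
  have key : ∀ u₁ u₂ : EuclideanSpace ℂ (Fin n),
      rHess f x u₁ u₂ = fderiv ℝ (fderiv ℝ f) x u₁ u₂ := by
    intro u₁ u₂
    have h3 := hdf.hasFDerivAt.clm_apply (hasFDerivAt_const u₂ x)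
    rw [rHess, h3.fderiv]
    simp
  rw [key, key, hsym v w]

lemma inner_fderiv_grad_symm (hU : IsOpen U) (hf : ContDiffOn ℝ (⊤ : ℕ∞) f U) (hx : x ∈ U)
    (v w : EuclideanSpace ℂ (Fin n)) :
    ⟪fderiv ℝ (grad f) x v, w⟫ = ⟪fderiv ℝ (grad f) x w, v⟫ := by
  rw [← rHess_eq_inner hU hf hx, ← rHess_eq_inner hU hf hx, rHess_symm hU hf hx]

lemma fderiv_grad_grad_eq_zero (hU : IsOpen U) (hf : ContDiffOn ℝ (⊤ : ℕ∞) f U)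
    (hg : ∀ z ∈ U, ‖fderiv ℝ f z‖ = 1) (hx : x ∈ U) :
    fderiv ℝ (grad f) x (grad f x) = 0 := by
  have hG := grad_hasFDerivAt hU hf hx
  have hφ := hG.inner ℝ hG
  have hev : (fun z => ⟪grad f z, grad f z⟫) =ᶠ[nhds x] fun _ => (1 : ℝ) := by
    filter_upwards [hU.mem_nhds hx] with z hz
    rw [real_inner_self_eq_norm_sq, norm_grad, hg z hz]; norm_num
  have h0 : HasFDerivAt (fun z => ⟪grad f z, grad f z⟫) 0 x :=
    (hasFDerivAt_const (𝕜 := ℝ) (1 : ℝ) x).congr_of_eventuallyEq hev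
  have huniq := hφ.unique h0
  have key : ∀ v, ⟪fderiv ℝ (grad f) x v, grad f x⟫ = 0 := by
    intro v
    have := congrFun (congrArg DFunLike.coe huniq) v
    simp only [ContinuousLinearMap.comp_apply, ContinuousLinearMap.prod_apply,
      fderivInnerCLM_apply, ContinuousLinearMap.zero_apply] at this
    have h2 : ⟪grad f x, fderiv ℝ (grad f) x v⟫ + ⟪fderiv ℝ (grad f) x v, grad f x⟫ = 0 := this
    rw [real_inner_comm (grad f x)] at h2
    linarith
  have h3 : ⟪fderiv ℝ (grad f) x (grad f x), fderiv ℝ (grad f) x (grad f x)⟫ = 0 := by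
    rw [inner_fderiv_grad_symm hU hf hx]
    exact key _
  exact inner_self_eq_zero.mp h3

lemma snd_fderiv_grad_symm (hU : IsOpen U) (hf : ContDiffOn ℝ (⊤ : ℕ∞) f U) (hx : x ∈ U)
    (v w : EuclideanSpace ℂ (Fin n)) :
    fderiv ℝ (fderiv ℝ (grad f)) x v w = fderiv ℝ (fderiv ℝ (grad f)) x w v :=
  ((grad_contDiffAt hU hf hx).isSymmSndFDerivAt (by rw [minSmoothness_of_isRCLikeNormedField]; exact WithTop.coe_le_coe.2 le_top)) v w

lemma third_deriv_identity (hU : IsOpen U) (hf : ContDiffOn ℝ (⊤ : ℕ∞) f U)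
    (hg : ∀ z ∈ U, ‖fderiv ℝ f z‖ = 1) (hx : x ∈ U) (v : EuclideanSpace ℂ (Fin n)) :
    fderiv ℝ (fderiv ℝ (grad f)) x v (grad f x)
      = - fderiv ℝ (grad f) x (fderiv ℝ (grad f) x v) := by
  have hG := grad_hasFDerivAt hU hf hx
  have hA : HasFDerivAt (fun y => fderiv ℝ (grad f) y) (fderiv ℝ (fderiv ℝ (grad f)) x) x :=
    (((grad_contDiffAt hU hf hx).fderiv_right (m := (⊤:ℕ∞)) (by simp)).differentiableAt
      (by simp)).hasFDerivAt
  have hcl := hA.clm_apply hG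
  have hev : (fun y => fderiv ℝ (grad f) y (grad f y)) =ᶠ[nhds x]
      fun _ => (0 : EuclideanSpace ℂ (Fin n)) := by
    filter_upwards [hU.mem_nhds hx] with z hz
    exact fderiv_grad_grad_eq_zero hU hf hg hz
  have h0 : HasFDerivAt (fun y => fderiv ℝ (grad f) y (grad f y)) 0 x :=
    (hasFDerivAt_const (𝕜 := ℝ) (0 : EuclideanSpace ℂ (Fin n)) x).congr_of_eventuallyEq hev
  have huniq := hcl.unique h0
  have := congrFun (congrArg DFunLike.coe huniq) v
  simp only [ContinuousLinearMap.add_apply, ContinuousLinearMap.comp_apply,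
    ContinuousLinearMap.flip_apply, ContinuousLinearMap.zero_apply] at this
  have h2 : fderiv ℝ (grad f) x (fderiv ℝ (grad f) x v)
      + fderiv ℝ (fderiv ℝ (grad f)) x v (grad f x) = 0 := this
  have := congrArg (fun q => q - fderiv ℝ (grad f) x (fderiv ℝ (grad f) x v)) h2
  simpa [add_sub_cancel_left, neg_eq_iff_eq_neg] using eq_neg_of_add_eq_zero_right h2

end Aux

section Main

variable {n : ℕ}

set_option maxHeartbeats 1000000 in
theorem squared_distance_estimate_convex' (Ω : Set (EuclideanSpace ℂ (Fin n)))
    (hopen : IsOpen Ω) (hconn : IsConnected Ω) (hbdd : Bornology.IsBounded Ω)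
    (hsmooth : ∃ U : Set (EuclideanSpace ℂ (Fin n)), IsOpen U ∧ frontier Ω ⊆ U ∧
      ContDiffOn ℝ (⊤ : ℕ∞) (sdist Ω) U ∧ ∀ z ∈ U, ‖fderiv ℝ (sdist Ω) z‖ = 1)
    (hconv : ∀ p ∈ frontier Ω, ∀ V : EuclideanSpace ℂ (Fin n),
      fderiv ℝ (sdist Ω) p V = 0 → 0 ≤ rHess (sdist Ω) p V V) :
    ∃ U : Set (EuclideanSpace ℂ (Fin n)), IsOpen U ∧ frontier Ω ⊆ U ∧
      ∀ z ∈ U ∩ Ω, ∀ V : EuclideanSpace ℂ (Fin n),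
        rHess (fun w => Metric.infDist w (frontier Ω) ^ 2) z V V ≤
          (fderiv ℝ (fun w => Metric.infDist w (frontier Ω) ^ 2) z V) ^ 2 / (2 * Metric.infDist z (frontier Ω) ^ 2) := by
  classical
  by_cases hfe : frontier Ω = ∅
  · refine ⟨∅, isOpen_empty, by simp [hfe], ?_⟩
    rintro z ⟨hz, -⟩
    exact absurd hz (notMem_empty z)
  have hfne : (frontier Ω).Nonempty := nonempty_iff_ne_empty.2 hfe
  obtain ⟨U₀, hU₀o, hU₀f, hC, hg⟩ := hsmooth
  set δ : EuclideanSpace ℂ (Fin n) → ℝ := sdist Ω with hδdef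
  have habs : ∀ w, |δ w| = infDist w (frontier Ω) := by
    intro w
    by_cases h : w ∈ Ω
    · simp [hδdef, sdist, h, abs_of_nonpos, infDist_nonneg]
    · simp [hδdef, sdist, h, abs_of_nonneg, infDist_nonneg]
  have hfc : IsCompact (frontier Ω) :=
    Metric.isCompact_of_isClosed_isBounded isClosed_frontier
      (hbdd.closure.subset frontier_subset_closure)
  obtain ⟨ε, hε, hthick⟩ := hfc.exists_thickening_subset_open hU₀o hU₀f
  set K : Set (EuclideanSpace ℂ (Fin n)) := cthickening (ε/4) (frontier Ω) with hKdef
  have hKU : K ⊆ U₀ :=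
    (cthickening_subset_thickening' hε (by linarith) _).trans hthick
  have hKc : IsCompact K := hfc.cthickening
  -- a bound for the Hessian operator norm on `K`
  have hAcont : ContinuousOn (fun y => fderiv ℝ (grad δ) y) U₀ := by
    intro y hy
    exact (((grad_contDiffAt hU₀o hC hy).fderiv_right (m := (⊤:ℕ∞))
      (by simp)).continuousAt).continuousWithinAt
  obtain ⟨C, hc⟩ := hKc.exists_bound_of_continuousOn (hAcont.mono hKU)
  -- the candidate neighborhood
  refine ⟨thickening (ε/8) (frontier Ω), isOpen_thickening,
    self_subset_thickening (by linarith) _, ?_⟩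
  rintro z ⟨hzT, hzΩ⟩ V
  set t₀ : ℝ := infDist z (frontier Ω) with ht₀def
  have hδz : δ z = -t₀ := by simp [hδdef, sdist, hzΩ, ht₀def]
  have hznf : z ∉ frontier Ω := by
    intro h
    rw [hopen.frontier_eq] at h
    exact h.2 hzΩ
  have ht₀pos : 0 < t₀ := (isClosed_frontier.notMem_iff_infDist_pos hfne).1 hznf
  have ht₀lt : t₀ < ε/8 := (mem_thickening_iff_infDist_lt hfne).1 hzT
  have hzU₀ : z ∈ U₀ := hthick ((mem_thickening_iff_infDist_lt hfne).2 (by linarith))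
  set u : EuclideanSpace ℂ (Fin n) := grad δ z with hudef
  have hu1 : ‖u‖ = 1 := by rw [hudef, norm_grad]; exact hg z hzU₀
  set γ : ℝ → EuclideanSpace ℂ (Fin n) := fun t => z + t • u with hγdef
  have hγz : γ 0 = z := by simp [hγdef]
  have hγdist : ∀ t, 0 ≤ t → dist (γ t) z = t := by
    intro t ht
    rw [hγdef]
    simp [dist_eq_norm, norm_smul, hu1, _root_.abs_of_nonneg ht]
  have hγK : ∀ t ∈ Icc (0:ℝ) t₀, γ t ∈ K := by
    intro t ht
    refine thickening_subset_cthickening _ _ ((mem_thickening_iff_infDist_lt hfne).2 ?_)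
    calc infDist (γ t) (frontier Ω) ≤ infDist z (frontier Ω) + dist (γ t) z :=
          infDist_le_infDist_add_dist
      _ = t₀ + t := by rw [hγdist t ht.1]
      _ < ε/4 := by linarith [ht.2]
  have hγU₀ : ∀ t ∈ Icc (0:ℝ) t₀, γ t ∈ U₀ := fun t ht => hKU (hγK t ht)
  have hγd : ∀ t : ℝ, HasDerivAt γ u t := by
    intro t
    have h1 : HasDerivAt (fun s : ℝ => s • u) ((1:ℝ) • u) t := (hasDerivAt_id t).smul_const u
    simpa [hγdef] using h1.const_add z
  -- the gradient is constant along γ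
  have hGu : ∀ t ∈ Icc (0:ℝ) t₀, grad δ (γ t) = u := by
    have hF' : ∀ t ∈ Icc (0:ℝ) t₀,
        HasDerivAt (fun s => grad δ (γ s) - u) (fderiv ℝ (grad δ) (γ t) u) t := by
      intro t ht
      have h1 : HasDerivAt (fun s => grad δ (γ s)) (fderiv ℝ (grad δ) (γ t) u) t := by
        have := (grad_hasFDerivAt hU₀o hC (hγU₀ t ht)).comp_hasDerivAt t (hγd t)
        exact this
      exact h1.sub_const u
    have hFcont : ContinuousOn (fun s => grad δ (γ s) - u) (Icc 0 t₀) :=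
      fun t ht => ((hF' t ht).continuousAt).continuousWithinAt
    have hbound : ∀ t ∈ Ico (0:ℝ) t₀,
        ‖fderiv ℝ (grad δ) (γ t) u‖ ≤ C * ‖grad δ (γ t) - u‖ + 0 := by
      intro t ht
      have htI : t ∈ Icc (0:ℝ) t₀ := ⟨ht.1, ht.2.le⟩
      have hz0 : fderiv ℝ (grad δ) (γ t) (grad δ (γ t)) = 0 :=
        fderiv_grad_grad_eq_zero hU₀o hC hg (hγU₀ t htI)
      have heq : fderiv ℝ (grad δ) (γ t) u = -(fderiv ℝ (grad δ) (γ t) (grad δ (γ t) - u)) := by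
        rw [map_sub, hz0]; simp
      rw [heq, norm_neg, add_zero]
      calc ‖fderiv ℝ (grad δ) (γ t) (grad δ (γ t) - u)‖
          ≤ ‖fderiv ℝ (grad δ) (γ t)‖ * ‖grad δ (γ t) - u‖ :=
            ContinuousLinearMap.le_opNorm _ _
        _ ≤ C * ‖grad δ (γ t) - u‖ :=
            mul_le_mul_of_nonneg_right (hc _ (hγK t htI)) (norm_nonneg _)
    have hgron := norm_le_gronwallBound_of_norm_deriv_right_le (δ := 0) hFcont
      (fun t ht => (hF' t ⟨ht.1, ht.2.le⟩).hasDerivWithinAt)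
      (by simp [hγz, hudef]) hbound
    intro t ht
    have := hgron t ht
    rw [gronwallBound_ε0_δ0] at this
    have h0 : grad δ (γ t) - u = 0 := by
      have := le_antisymm this (norm_nonneg _)
      exact norm_eq_zero.1 this
    exact sub_eq_zero.1 h0
  -- δ along γ
  have hδγ : ∀ t ∈ Icc (0:ℝ) t₀, δ (γ t) = δ z + t := by
    have hh : ∀ t ∈ Icc (0:ℝ) t₀, HasDerivAt (fun s => δ (γ s) - s) 0 t := by
      intro t ht
      have hδdiff : HasFDerivAt δ (fderiv ℝ δ (γ t)) (γ t) :=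
        (((contDiffAt_of hU₀o hC (hγU₀ t ht))).differentiableAt
          (by simp)).hasFDerivAt
      have h1 : HasDerivAt (fun s => δ (γ s)) (fderiv ℝ δ (γ t) u) t := by
        have := hδdiff.comp_hasDerivAt t (hγd t)
        exact this
      have h2 : fderiv ℝ δ (γ t) u = 1 := by
        rw [← inner_grad, hGu t ht, real_inner_self_eq_norm_sq, hu1]; norm_num
      rw [h2] at h1
      have := h1.sub (hasDerivAt_id t); rw [sub_self] at this; exact this
    have hcont : ContinuousOn (fun s => δ (γ s) - s) (Icc 0 t₀) :=
      fun t ht => ((hh t ht).continuousAt).continuousWithinAt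
    have := constant_of_has_deriv_right_zero hcont
      (fun t ht => (hh t ⟨ht.1, ht.2.le⟩).hasDerivWithinAt)
    intro t ht
    have h3 := this t ht
    simp only [hγz] at h3
    linarith [h3]
  -- the boundary point
  set p : EuclideanSpace ℂ (Fin n) := γ t₀ with hpdef
  have ht₀I : t₀ ∈ Icc (0:ℝ) t₀ := ⟨ht₀pos.le, le_refl _⟩
  have h0I : (0:ℝ) ∈ Icc (0:ℝ) t₀ := ⟨le_refl _, ht₀pos.le⟩
  have hpU₀ : p ∈ U₀ := hγU₀ t₀ ht₀I
  have hδp : δ p = 0 := by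
    have := hδγ t₀ ht₀I
    rw [hδz] at this
    simpa [hpdef] using this
  have hp : p ∈ frontier Ω := by
    have h1 : infDist p (frontier Ω) = 0 := by rw [← habs, hδp, abs_zero]
    exact (isClosed_frontier.mem_iff_infDist_zero hfne).2 h1
  have hgp : grad δ p = u := hGu t₀ ht₀I
  -- positivity of the full Hessian of δ at the boundary point p
  have hVp : 0 ≤ ⟪fderiv ℝ (grad δ) p V, V⟫ := by
    set c : ℝ := ⟪grad δ p, V⟫ with hcdef
    set V' : EuclideanSpace ℂ (Fin n) := V - c • grad δ p with hV'def
    have hgp1 : ‖grad δ p‖ = 1 := by rw [norm_grad]; exact hg p hpU₀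
    have hV'tan : fderiv ℝ δ p V' = 0 := by
      rw [← inner_grad, hV'def, inner_sub_right, real_inner_smul_right,
        real_inner_self_eq_norm_sq, hgp1]
      simp [hcdef]
    have hpos := hconv p hp V' hV'tan
    have hA0 : fderiv ℝ (grad δ) p (grad δ p) = 0 :=
      fderiv_grad_grad_eq_zero hU₀o hC hg hpU₀
    have hsplit : ⟪fderiv ℝ (grad δ) p V, V⟫ = ⟪fderiv ℝ (grad δ) p V', V'⟫ := by
      have hVsum : V = V' + c • grad δ p := by rw [hV'def]; abel
      calc ⟪fderiv ℝ (grad δ) p V, V⟫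
          = ⟪fderiv ℝ (grad δ) p (V' + c • grad δ p), V' + c • grad δ p⟫ := by
            rw [← hVsum]
        _ = ⟪fderiv ℝ (grad δ) p V', V' + c • grad δ p⟫ := by
            rw [map_add, map_smul, hA0, smul_zero, add_zero]
        _ = ⟪fderiv ℝ (grad δ) p V', V'⟫ + c * ⟪fderiv ℝ (grad δ) p V', grad δ p⟫ := by
            rw [inner_add_right, real_inner_smul_right]
        _ = ⟪fderiv ℝ (grad δ) p V', V'⟫ := by
            rw [inner_fderiv_grad_symm hU₀o hC hpU₀ V' (grad δ p), hA0]
            simp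
    rw [hsplit, ← rHess_eq_inner hU₀o hC hpU₀]
    exact hpos
  -- monotonicity of the Hessian quadratic form along γ
  have hH : 0 ≤ rHess δ z V V := by
    set v : ℝ → ℝ := fun t => ⟪fderiv ℝ (grad δ) (γ t) V, V⟫ with hvdef
    have hv' : ∀ t ∈ Icc (0:ℝ) t₀,
        HasDerivAt v (-‖fderiv ℝ (grad δ) (γ t) V‖^2) t := by
      intro t ht
      have hxU := hγU₀ t ht
      have hA : HasFDerivAt (fun y => fderiv ℝ (grad δ) y)
          (fderiv ℝ (fderiv ℝ (grad δ)) (γ t)) (γ t) :=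
        (((grad_contDiffAt hU₀o hC hxU).fderiv_right (m := (⊤:ℕ∞))
          (by simp)).differentiableAt (by simp)).hasFDerivAt
      have h1 : HasDerivAt (fun s => fderiv ℝ (grad δ) (γ s))
          (fderiv ℝ (fderiv ℝ (grad δ)) (γ t) u) t := by
        have := hA.comp_hasDerivAt t (hγd t)
        exact this
      have h2 : HasDerivAt (fun s => fderiv ℝ (grad δ) (γ s) V)
          (fderiv ℝ (fderiv ℝ (grad δ)) (γ t) u V) t := by
        have := h1.clm_apply (hasDerivAt_const t V)
        simpa using this
      have h3 : HasDerivAt v ⟪fderiv ℝ (fderiv ℝ (grad δ)) (γ t) u V, V⟫ t := by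
        have := h2.inner ℝ (hasDerivAt_const t V)
        simpa [hvdef] using this
      have hB : fderiv ℝ (fderiv ℝ (grad δ)) (γ t) u V
          = - fderiv ℝ (grad δ) (γ t) (fderiv ℝ (grad δ) (γ t) V) := by
        rw [snd_fderiv_grad_symm hU₀o hC hxU u V, ← hGu t ht]
        exact third_deriv_identity hU₀o hC hg hxU V
      rw [hB] at h3
      have hval : ⟪-(fderiv ℝ (grad δ) (γ t) (fderiv ℝ (grad δ) (γ t) V)), V⟫
          = -‖fderiv ℝ (grad δ) (γ t) V‖^2 := by
        rw [inner_neg_left, inner_fderiv_grad_symm hU₀o hC hxU _ V,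
          real_inner_self_eq_norm_sq]
      rwa [hval] at h3
    have hanti : AntitoneOn v (Icc 0 t₀) := by
      apply antitoneOn_of_deriv_nonpos (convex_Icc 0 t₀)
        (fun t ht => ((hv' t ht).continuousAt).continuousWithinAt)
      · intro t ht
        rw [interior_Icc] at ht
        exact ((hv' t ⟨ht.1.le, ht.2.le⟩).differentiableAt).differentiableWithinAt
      · intro t ht
        rw [interior_Icc] at ht
        rw [(hv' t ⟨ht.1.le, ht.2.le⟩).deriv]
        simp [sq_nonneg]
    have hmono := hanti h0I ht₀I ht₀pos.le
    have hvt₀ : 0 ≤ v t₀ := hVp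
    have : 0 ≤ v 0 := le_trans hvt₀ hmono
    rw [rHess_eq_inner hU₀o hC hzU₀]
    simpa [hvdef, hγz] using this
  -- final computation
  have heq : (fun w => infDist w (frontier Ω) ^ 2) = fun w => δ w ^ 2 := by
    funext w
    rw [← habs w, _root_.sq_abs]
  have hδdiffz : HasFDerivAt δ (fderiv ℝ δ z) z :=
    ((contDiffAt_of hU₀o hC hzU₀).differentiableAt (by simp)).hasFDerivAt
  have hsq : ∀ w ∈ U₀, HasFDerivAt (fun y => δ y ^ 2) ((2 * δ w) • fderiv ℝ δ w) w := by
    intro w hw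
    have hd : HasFDerivAt δ (fderiv ℝ δ w) w :=
      ((contDiffAt_of hU₀o hC hw).differentiableAt (by simp)).hasFDerivAt
    have hmul : HasFDerivAt (fun y => δ y * δ y) _ w := hd.mul hd
    have hfun : (fun y => δ y * δ y) = fun y => δ y ^ 2 := by
      funext y; ring
    rw [hfun] at hmul
    have h2w : (2 * δ w) • fderiv ℝ δ w = δ w • fderiv ℝ δ w + δ w • fderiv ℝ δ w := by
      ext W
      simp [two_mul, add_smul]
    rw [h2w]; exact hmul
  set g : ℝ := fderiv ℝ δ z V with hgdef
  set H : ℝ := rHess δ z V V with hHdef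
  -- rewrite the Hessian of the squared distance
  have hLHS : rHess (fun w => infDist w (frontier Ω) ^ 2) z V V = 2 * δ z * H + 2 * g^2 := by
    rw [heq]
    have hev2 : (fun w => fderiv ℝ (fun y => δ y ^ 2) w V) =ᶠ[nhds z]
        (fun w => 2 * δ w * fderiv ℝ δ w V) := by
      filter_upwards [hU₀o.mem_nhds hzU₀] with w hw
      rw [(hsq w hw).fderiv]
      simp [mul_assoc]
    have hq : DifferentiableAt ℝ (fun w => fderiv ℝ δ w V) z := by
      have hfun : (fun w => fderiv ℝ δ w V) = fun w => ⟪grad δ w, V⟫ :=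
        funext fun w => (inner_grad δ w V).symm
      rw [hfun]
      exact ((grad_hasFDerivAt hU₀o hC hzU₀).differentiableAt).inner ℝ
        (differentiableAt_const V)
    have h1' : HasFDerivAt (fun w => 2 * δ w) ((2:ℝ) • fderiv ℝ δ z) z :=
      hδdiffz.const_mul 2
    have h2' : HasFDerivAt (fun w => fderiv ℝ δ w V)
        (fderiv ℝ (fun w => fderiv ℝ δ w V) z) z := hq.hasFDerivAt
    have hmul : HasFDerivAt (fun w => 2 * δ w * fderiv ℝ δ w V) _ z := h1'.mul h2'
    have hHval : fderiv ℝ (fun w => fderiv ℝ δ w V) z V = H := rfl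
    calc rHess (fun w => δ w ^ 2) z V V
        = fderiv ℝ (fun w => fderiv ℝ (fun y => δ y ^ 2) w V) z V := rfl
      _ = fderiv ℝ (fun w => 2 * δ w * fderiv ℝ δ w V) z V := by rw [hev2.fderiv_eq]
      _ = 2 * δ z * H + 2 * g^2 := by
          rw [hmul.fderiv]
          simp [hHval, hgdef]
          ring
  have hRHS : fderiv ℝ (fun w => infDist w (frontier Ω) ^ 2) z V = 2 * δ z * g := by
    rw [heq, (hsq z hzU₀).fderiv]
    simp [hgdef, mul_assoc]
  rw [hLHS, hRHS]
  have ht₀sq : infDist z (frontier Ω) ^ 2 = t₀^2 := by rw [← ht₀def]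
  rw [ht₀sq, hδz]
  have hrhs : (2 * (-t₀) * g)^2 / (2 * t₀^2) = 2 * g^2 := by
    rw [div_eq_iff (by positivity)]
    ring
  rw [hrhs]
  nlinarith [mul_nonneg ht₀pos.le hH]

end Main

/-- If `Ω` is a smoothly bounded convex domain and `D = dist(·, bΩ)²`, then near `bΩ` and
inside `Ω` one has `H_D(z)(V,V) ≤ |⟨∇D(z),V⟩|² / (2D(z))`. -/
theorem squared_distance_estimate_convex {n : ℕ} (Ω : Set (EuclideanSpace ℂ (Fin n)))
    (hopen : IsOpen Ω) (hconn : IsConnected Ω) (hbdd : Bornology.IsBounded Ω)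
    (hsmooth : HasSmoothBoundary Ω)
    (hconv : ∀ p ∈ frontier Ω, ∀ V : EuclideanSpace ℂ (Fin n),
      fderiv ℝ (sdist Ω) p V = 0 → 0 ≤ rHess (sdist Ω) p V V) :
    ∃ U : Set (EuclideanSpace ℂ (Fin n)), IsOpen U ∧ frontier Ω ⊆ U ∧
      ∀ z ∈ U ∩ Ω, ∀ V : EuclideanSpace ℂ (Fin n),
        rHess (fun w => Metric.infDist w (frontier Ω) ^ 2) z V V ≤
          (fderiv ℝ (fun w => Metric.infDist w (frontier Ω) ^ 2) z V) ^ 2 / (2 * Metric.infDist z (frontier Ω) ^ 2) := by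
  exact squared_distance_estimate_convex' Ω hopen hconn hbdd hsmooth hconv
end
end

section
/- Let Ω ⊂ ℂⁿ be a bounded domain with smooth boundary and suppose the complex Hessian of the signed distance function satisfies L_δ(z)(V,V) ≥ 0 for all z ∈ bΩ and all V in the real tangent space ℝT_z(bΩ). Then in fact L_δ(z)(W,W) ≥ 0 for all z ∈ bΩ and all W ∈ ℂⁿ. -/
noncomputable section

open Complex Metric Set
open scoped Classical RealInnerProductSpace

section Aux

variable {n : ℕ}

lemma smul_decomp (a b : ℝ) (W : EuclideanSpace ℂ (Fin n)) :
    ((a : ℂ) + (b : ℂ) * Complex.I) • W = a • W + b • (Complex.I • W) := by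
  rw [add_smul, mul_smul, Complex.coe_smul, Complex.coe_smul]

lemma fderiv_apply_smul_complex {F : Type*} [NormedAddCommGroup F] [NormedSpace ℝ F]
    (g : EuclideanSpace ℂ (Fin n) → F) (z W : EuclideanSpace ℂ (Fin n)) (a b : ℝ) :
    fderiv ℝ g z (((a : ℂ) + (b : ℂ) * Complex.I) • W)
      = a • fderiv ℝ g z W + b • fderiv ℝ g z (Complex.I • W) := by
  rw [smul_decomp, map_add, map_smul, map_smul]

lemma I_smul_smul (a b : ℝ) (W : EuclideanSpace ℂ (Fin n)) :
    Complex.I • (((a : ℂ) + (b : ℂ) * Complex.I) • W)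
      = (((-b : ℝ) : ℂ) + ((a : ℝ) : ℂ) * Complex.I) • W := by
  rw [smul_smul]
  congr 1
  push_cast
  linear_combination ((b : ℂ)) * Complex.I_sq

lemma dbarDir_smul (f : EuclideanSpace ℂ (Fin n) → ℂ) (z W : EuclideanSpace ℂ (Fin n))
    (a b : ℝ) :
    dbarDir f z (((a : ℂ) + (b : ℂ) * Complex.I) • W)
      = ((a : ℂ) - (b : ℂ) * Complex.I) * dbarDir f z W := by
  unfold dbarDir
  rw [I_smul_smul, fderiv_apply_smul_complex, fderiv_apply_smul_complex]
  simp only [Complex.real_smul]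
  push_cast
  linear_combination ((1/2 : ℂ) * (b : ℂ) * fderiv ℝ f z (Complex.I • W)) * Complex.I_sq

lemma dDir_smul (g : EuclideanSpace ℂ (Fin n) → ℂ) (p W : EuclideanSpace ℂ (Fin n))
    (a b : ℝ) :
    dDir g p (((a : ℂ) + (b : ℂ) * Complex.I) • W)
      = ((a : ℂ) + (b : ℂ) * Complex.I) * dDir g p W := by
  unfold dDir
  rw [I_smul_smul, fderiv_apply_smul_complex, fderiv_apply_smul_complex]
  simp only [Complex.real_smul]
  push_cast
  linear_combination ((1/2 : ℂ) * (b : ℂ) * fderiv ℝ g p (Complex.I • W)) * Complex.I_sq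

lemma fderiv_const_mul' (c : ℂ) (g : EuclideanSpace ℂ (Fin n) → ℂ)
    (p : EuclideanSpace ℂ (Fin n)) :
    fderiv ℝ (fun z => c * g z) p = c • fderiv ℝ g p := by
  by_cases hg : DifferentiableAt ℝ g p
  · exact fderiv_const_mul hg c
  · by_cases hc : c = 0
    · subst hc; ext x; simp
    · have h2 : ¬ DifferentiableAt ℝ (fun z => c * g z) p := by
        intro h
        have h3 := h.const_mul c⁻¹
        have heq : (fun z => c⁻¹ * (c * g z)) = g := by
          funext z
          field_simp
        rw [heq] at h3
        exact hg h3
      rw [fderiv_zero_of_not_differentiableAt hg, fderiv_zero_of_not_differentiableAt h2]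
      ext x; simp

lemma dDir_const_mul (c : ℂ) (g : EuclideanSpace ℂ (Fin n) → ℂ)
    (p V : EuclideanSpace ℂ (Fin n)) :
    dDir (fun z => c * g z) p V = c * dDir g p V := by
  unfold dDir
  rw [fderiv_const_mul' c g p]
  simp only [ContinuousLinearMap.smul_apply, smul_eq_mul]
  ring

lemma cHess_smul (f : EuclideanSpace ℂ (Fin n) → ℂ) (p W : EuclideanSpace ℂ (Fin n))
    (a b : ℝ) :
    cHess f p (((a : ℂ) + (b : ℂ) * Complex.I) • W) (((a : ℂ) + (b : ℂ) * Complex.I) • W)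
      = (((a ^ 2 + b ^ 2 : ℝ)) : ℂ) * cHess f p W W := by
  unfold cHess
  have h1 : (fun z => dbarDir f z (((a : ℂ) + (b : ℂ) * Complex.I) • W))
      = fun z => ((a : ℂ) - (b : ℂ) * Complex.I) * dbarDir f z W := by
    funext z
    exact dbarDir_smul f z W a b
  rw [h1, dDir_const_mul, dDir_smul]
  push_cast
  linear_combination (-(b : ℂ) ^ 2 * dDir (fun z => dbarDir f z W) p W) * Complex.I_sq

end Aux

/-- If the complex Hessian of `δ` is nonnegative on the real tangent space at each
boundary point, then it is nonnegative on all of `ℂⁿ` at each boundary point. -/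
theorem levi_form_nonneg_spreads_to_all_directions {n : ℕ} (Ω : Set (EuclideanSpace ℂ (Fin n)))
    (hopen : IsOpen Ω) (hconn : IsConnected Ω) (hbdd : Bornology.IsBounded Ω)
    (hsmooth : HasSmoothBoundary Ω)
    (hpsh : ∀ z ∈ frontier Ω, ∀ V : EuclideanSpace ℂ (Fin n),
      fderiv ℝ (sdist Ω) z V = 0 → 0 ≤ (cHess (fun w => ((sdist Ω w : ℝ) : ℂ)) z V V).re) :
    ∀ z ∈ frontier Ω, ∀ W : EuclideanSpace ℂ (Fin n), 0 ≤ (cHess (fun w => ((sdist Ω w : ℝ) : ℂ)) z W W).re := by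
  intro z hz W
  by_cases h0 : fderiv ℝ (sdist Ω) z W = 0
  · exact hpsh z hz W h0
  · set a : ℝ := fderiv ℝ (sdist Ω) z (Complex.I • W) with ha
    set b : ℝ := -(fderiv ℝ (sdist Ω) z W) with hb
    set V : EuclideanSpace ℂ (Fin n) := ((a : ℂ) + (b : ℂ) * Complex.I) • W with hV
    have htan : fderiv ℝ (sdist Ω) z V = 0 := by
      rw [hV, fderiv_apply_smul_complex]
      simp only [smul_eq_mul, hb]
      ring
    have hnn := hpsh z hz V htan
    rw [hV, cHess_smul] at hnn
    have hre : ((((a ^ 2 + b ^ 2 : ℝ)) : ℂ) * cHess (fun w => ((sdist Ω w : ℝ) : ℂ)) z W W).re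
        = (a ^ 2 + b ^ 2) * (cHess (fun w => ((sdist Ω w : ℝ) : ℂ)) z W W).re := by
      rw [Complex.re_ofReal_mul]
    rw [hre] at hnn
    have hpos : 0 < a ^ 2 + b ^ 2 := by
      have hbne : b ≠ 0 := by simpa [hb] using h0
      positivity
    nlinarith [hnn, hpos]
end
end

section
/- Let Ω ⊂ ℂⁿ be a bounded domain with smooth boundary and suppose the complex Hessian of the signed distance function satisfies L_δ(z)(V,V) ≥ 0 for all z ∈ bΩ and all V in the real tangent space ℝT_z(bΩ). Then there exists an open neighborhood U of bΩ such that δ is plurisubharmonic on U ∩ Ω, i.e. L_δ(z)(V,V) ≥ 0 for all z ∈ U ∩ Ω and all V ∈ ℂⁿ. -/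
noncomputable section

open Complex Metric Set
open scoped Classical RealInnerProductSpace

section Aux

open InnerProductSpace

variable {n : ℕ}

private lemma inner_I_smul_right (x y : EuclideanSpace ℂ (Fin n)) :
    ⟪x, Complex.I • y⟫ = -⟪Complex.I • x, y⟫ := by
  simp only [PiLp.inner_apply, Complex.inner, PiLp.smul_apply, smul_eq_mul,
    ← Finset.sum_neg_distrib]
  refine Finset.sum_congr rfl fun k _ => ?_
  simp [Complex.mul_re]
  ring

private lemma inner_I_smul_self (x : EuclideanSpace ℂ (Fin n)) :
    ⟪x, Complex.I • x⟫ = 0 := by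
  have h := inner_I_smul_right x x
  have h2 : ⟪Complex.I • x, x⟫ = ⟪x, Complex.I • x⟫ := real_inner_comm _ _
  rw [h2] at h
  linarith

private lemma I_smul_I_smul (x : EuclideanSpace ℂ (Fin n)) :
    Complex.I • Complex.I • x = -x := by
  rw [smul_smul, Complex.I_mul_I, neg_one_smul]

set_option maxHeartbeats 1000000 in
private lemma stepA (A : EuclideanSpace ℂ (Fin n) →L[ℝ] EuclideanSpace ℂ (Fin n))
    (u : EuclideanSpace ℂ (Fin n)) (hu1 : ‖u‖ = 1)
    (hsym : ∀ a b, ⟪A a, b⟫ = ⟪A b, a⟫)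
    (hker : ∀ a, ⟪A a, u⟫ = 0)
    (hyp : ∀ W, ⟪u, W⟫ = 0 → 0 ≤ ⟪A W, W⟫ + ⟪A (Complex.I • W), Complex.I • W⟫)
    (V : EuclideanSpace ℂ (Fin n)) :
    0 ≤ ⟪A V, V⟫ + ⟪A (Complex.I • V), Complex.I • V⟫ := by
  have hkeru : ∀ x, ⟪A u, x⟫ = 0 := fun x => (hsym u x).trans (hker x)
  have huu : ⟪u, u⟫ = 1 := by
    rw [real_inner_self_eq_norm_sq, hu1]; norm_num
  set a := ⟪u, V⟫ with ha
  set b := ⟪u, Complex.I • V⟫ with hb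
  set y := Complex.I • u with hy
  set W : EuclideanSpace ℂ (Fin n) := V - a • u + b • y with hW
  have huy : ⟪u, y⟫ = 0 := inner_I_smul_self u
  have hIy : Complex.I • y = -u := I_smul_I_smul u
  have hIW : Complex.I • W = Complex.I • V - a • y - b • u := by
    rw [hW, smul_add, smul_sub, smul_comm, smul_comm Complex.I b, hIy, smul_neg]
    abel
  have htW : ⟪u, W⟫ = 0 := by
    rw [hW]
    rw [inner_add_right, inner_sub_right, real_inner_smul_right, real_inner_smul_right, huu, huy]
    ring
  have hV : V = W + a • u - b • y := by rw [hW]; abel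
  set x2 := Complex.I • W with hx2
  have htIW : ⟪u, x2⟫ = 0 := by
    rw [hIW, inner_sub_right, inner_sub_right, real_inner_smul_right, real_inner_smul_right,
      huu, huy]
    ring
  have hIV : Complex.I • V = x2 + a • y + b • u := by
    rw [hIW]; abel
  have hsum1 : ⟪A V, V⟫ + ⟪A (Complex.I • V), Complex.I • V⟫
      = (⟪A W, W⟫ + ⟪A x2, x2⟫) - 2 * b * ⟪A W, y⟫ + 2 * a * ⟪A x2, y⟫
        + (a ^ 2 + b ^ 2) * ⟪A y, y⟫ := by
    rw [hIV]
    nth_rewrite 1 [hV]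
    nth_rewrite 1 [hV]
    simp only [map_add, map_sub, map_smul, inner_add_left, inner_add_right, inner_sub_left,
      inner_sub_right, real_inner_smul_left, real_inner_smul_right, hker, hkeru]
    rw [hsym y W, hsym y x2]
    ring
  rcases eq_or_lt_of_le (by positivity : (0:ℝ) ≤ a ^ 2 + b ^ 2) with hr | hr
  · have ha0 : a = 0 := by nlinarith [sq_nonneg a, sq_nonneg b]
    have hb0 : b = 0 := by nlinarith [sq_nonneg a, sq_nonneg b]
    rw [hsum1, ha0, hb0]
    have h := hyp W htW
    rw [← hx2] at h
    linarith
  · set r := a ^ 2 + b ^ 2 with hrdef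
    set U₀ : EuclideanSpace ℂ (Fin n) := (-b) • W + a • x2 + r • y with hU₀
    have htU₀ : ⟪u, U₀⟫ = 0 := by
      rw [hU₀, inner_add_right, inner_add_right, real_inner_smul_right, real_inner_smul_right,
        real_inner_smul_right, htW, htIW, huy]
      ring
    have hIU₀ : Complex.I • U₀ = (-b) • x2 + (-a) • W + (-r) • u := by
      rw [hU₀, smul_add, smul_add, smul_comm Complex.I (-b), smul_comm Complex.I a,
        smul_comm Complex.I r, ← hx2, I_smul_I_smul, hIy]
      simp only [neg_smul, smul_neg]
    have hsum2 : ⟪A U₀, U₀⟫ + ⟪A (Complex.I • U₀), Complex.I • U₀⟫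
        = r * (⟪A V, V⟫ + ⟪A (Complex.I • V), Complex.I • V⟫) := by
      rw [hsum1, hU₀, hIU₀]
      simp only [map_add, map_smul, inner_add_left, inner_add_right,
        real_inner_smul_left, real_inner_smul_right, hker, hkeru]
      rw [hsym x2 W, hsym y W, hsym y x2]
      ring
    have h0 := hyp U₀ htU₀
    rw [hsum2] at h0
    by_contra hneg
    push_neg at hneg
    nlinarith [mul_pos hr (neg_pos.mpr hneg)]

private def rieszCLM (n : ℕ) :
    StrongDual ℝ (EuclideanSpace ℂ (Fin n)) →L[ℝ] EuclideanSpace ℂ (Fin n) :=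
  { toFun := fun φ => (toDual ℝ (EuclideanSpace ℂ (Fin n))).symm φ
    map_add' := fun φ ψ => by simp
    map_smul' := fun r φ => by simp
    cont := (toDual ℝ (EuclideanSpace ℂ (Fin n))).symm.continuous }

private lemma rieszCLM_inner (φ : StrongDual ℝ (EuclideanSpace ℂ (Fin n)))
    (x : EuclideanSpace ℂ (Fin n)) : ⟪rieszCLM n φ, x⟫ = φ x :=
  toDual_symm_apply

private lemma rieszCLM_norm (φ : StrongDual ℝ (EuclideanSpace ℂ (Fin n))) :
    ‖rieszCLM n φ‖ = ‖φ‖ :=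
  LinearIsometryEquiv.norm_map _ φ

private lemma fderiv_cdo {F : Type*} [NormedAddCommGroup F] [NormedSpace ℝ F]
    {f : EuclideanSpace ℂ (Fin n) → F} {U : Set (EuclideanSpace ℂ (Fin n))}
    (hU : IsOpen U) (hf : ContDiffOn ℝ (⊤ : ℕ∞) f U) :
    ContDiffOn ℝ (⊤ : ℕ∞) (fderiv ℝ f) U :=
  hf.fderiv_of_isOpen hU (m := ((⊤ : ℕ∞) : WithTop ℕ∞)) (by simp)

private def Gvec (δ : EuclideanSpace ℂ (Fin n) → ℝ) (x : EuclideanSpace ℂ (Fin n)) :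
    EuclideanSpace ℂ (Fin n) := rieszCLM n (fderiv ℝ δ x)

variable {δ : EuclideanSpace ℂ (Fin n) → ℝ} {U : Set (EuclideanSpace ℂ (Fin n))}

private lemma Gvec_contDiffOn (hU : IsOpen U) (hδ : ContDiffOn ℝ (⊤ : ℕ∞) δ U) :
    ContDiffOn ℝ (⊤ : ℕ∞) (Gvec δ) U :=
  (rieszCLM n).contDiff.comp_contDiffOn (fderiv_cdo hU hδ)

private lemma Gvec_hasFDerivAt (hU : IsOpen U) (hδ : ContDiffOn ℝ (⊤ : ℕ∞) δ U)
    {y : EuclideanSpace ℂ (Fin n)} (hy : y ∈ U) :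
    HasFDerivAt (Gvec δ) (fderiv ℝ (Gvec δ) y) y :=
  (((Gvec_contDiffOn hU hδ).differentiableOn (by norm_num)).differentiableAt
    (hU.mem_nhds hy)).hasFDerivAt

private lemma Gvec_deriv_hasFDerivAt (hU : IsOpen U) (hδ : ContDiffOn ℝ (⊤ : ℕ∞) δ U)
    {y : EuclideanSpace ℂ (Fin n)} (hy : y ∈ U) :
    HasFDerivAt (fderiv ℝ (Gvec δ)) (fderiv ℝ (fderiv ℝ (Gvec δ)) y) y :=
  (((fderiv_cdo hU (Gvec_contDiffOn hU hδ)).differentiableOn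
    (by norm_num)).differentiableAt (hU.mem_nhds hy)).hasFDerivAt

private lemma Gvec_bridge (hU : IsOpen U) (hδ : ContDiffOn ℝ (⊤ : ℕ∞) δ U)
    {y : EuclideanSpace ℂ (Fin n)} (hy : y ∈ U) (v w : EuclideanSpace ℂ (Fin n)) :
    ⟪fderiv ℝ (Gvec δ) y v, w⟫ = fderiv ℝ (fderiv ℝ δ) y v w := by
  have hgc : ContDiffOn ℝ (⊤ : ℕ∞) (fderiv ℝ δ) U :=
    fderiv_cdo hU hδ
  have hgdiff : DifferentiableAt ℝ (fderiv ℝ δ) y :=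
    (hgc.differentiableOn (by norm_num)).differentiableAt (hU.mem_nhds hy)
  have : HasFDerivAt (Gvec δ) ((rieszCLM n).comp (fderiv ℝ (fderiv ℝ δ) y)) y :=
    (rieszCLM n).hasFDerivAt.comp y hgdiff.hasFDerivAt
  rw [this.fderiv]
  exact rieszCLM_inner _ _

private lemma Gvec_sym (hU : IsOpen U) (hδ : ContDiffOn ℝ (⊤ : ℕ∞) δ U)
    {y : EuclideanSpace ℂ (Fin n)} (hy : y ∈ U) (v w : EuclideanSpace ℂ (Fin n)) :
    ⟪fderiv ℝ (Gvec δ) y v, w⟫ = ⟪fderiv ℝ (Gvec δ) y w, v⟫ := by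
  rw [Gvec_bridge hU hδ hy, Gvec_bridge hU hδ hy]
  have hgdiff : DifferentiableAt ℝ (fderiv ℝ δ) y :=
    ((fderiv_cdo hU hδ).differentiableOn
      (by norm_num)).differentiableAt (hU.mem_nhds hy)
  have hev : ∀ᶠ x in nhds y, HasFDerivAt δ (fderiv ℝ δ x) x := by
    filter_upwards [hU.eventually_mem hy] with x hx
    exact ((hδ.differentiableOn (by norm_num)).differentiableAt (hU.mem_nhds hx)).hasFDerivAt
  exact second_derivative_symmetric_of_eventually hev hgdiff.hasFDerivAt v w

private lemma hessApply_hasFDerivAt (hU : IsOpen U) (hδ : ContDiffOn ℝ (⊤ : ℕ∞) δ U)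
    {y : EuclideanSpace ℂ (Fin n)} (hy : y ∈ U) (v : EuclideanSpace ℂ (Fin n)) :
    HasFDerivAt (fun x => fderiv ℝ (Gvec δ) x v)
      ((fderiv ℝ (fderiv ℝ (Gvec δ)) y).flip v) y := by
  simpa using (Gvec_deriv_hasFDerivAt hU hδ hy).clm_apply (hasFDerivAt_const v y)

private lemma innerHess_hasFDerivAt (hU : IsOpen U) (hδ : ContDiffOn ℝ (⊤ : ℕ∞) δ U)
    {y : EuclideanSpace ℂ (Fin n)} (hy : y ∈ U) (v w : EuclideanSpace ℂ (Fin n)) :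
    HasFDerivAt (fun x => ⟪fderiv ℝ (Gvec δ) x v, w⟫)
      (((innerSL ℝ).flip w).comp ((fderiv ℝ (fderiv ℝ (Gvec δ)) y).flip v)) y :=
  ((innerSL ℝ).flip w).hasFDerivAt.comp y (hessApply_hasFDerivAt hU hδ hy v)

private lemma Gvec_sym12 (hU : IsOpen U) (hδ : ContDiffOn ℝ (⊤ : ℕ∞) δ U)
    {y : EuclideanSpace ℂ (Fin n)} (hy : y ∈ U) (a b : EuclideanSpace ℂ (Fin n)) :
    fderiv ℝ (fderiv ℝ (Gvec δ)) y a b = fderiv ℝ (fderiv ℝ (Gvec δ)) y b a := by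
  have hev : ∀ᶠ x in nhds y, HasFDerivAt (Gvec δ) (fderiv ℝ (Gvec δ) x) x := by
    filter_upwards [hU.eventually_mem hy] with x hx
    exact Gvec_hasFDerivAt hU hδ hx
  exact second_derivative_symmetric_of_eventually hev (Gvec_deriv_hasFDerivAt hU hδ hy) a b

private lemma Gvec_sym23 (hU : IsOpen U) (hδ : ContDiffOn ℝ (⊤ : ℕ∞) δ U)
    {y : EuclideanSpace ℂ (Fin n)} (hy : y ∈ U) (d v w : EuclideanSpace ℂ (Fin n)) :
    ⟪fderiv ℝ (fderiv ℝ (Gvec δ)) y d v, w⟫ = ⟪fderiv ℝ (fderiv ℝ (Gvec δ)) y d w, v⟫ := by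
  have hev : (fun x => ⟪fderiv ℝ (Gvec δ) x v, w⟫) =ᶠ[nhds y]
      (fun x => ⟪fderiv ℝ (Gvec δ) x w, v⟫) := by
    filter_upwards [hU.eventually_mem hy] with x hx
    exact Gvec_sym hU hδ hx v w
  have h1 := (innerHess_hasFDerivAt hU hδ hy v w).fderiv
  have h2 := (innerHess_hasFDerivAt hU hδ hy w v).fderiv
  have := hev.fderiv_eq (𝕜 := ℝ)
  rw [h1, h2] at this
  have happ := congrFun (congrArg DFunLike.coe this) d
  exact happ

private lemma Gvec_ker (hU : IsOpen U) (hδ : ContDiffOn ℝ (⊤ : ℕ∞) δ U)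
    (hnorm : ∀ x ∈ U, ‖fderiv ℝ δ x‖ = 1)
    {y : EuclideanSpace ℂ (Fin n)} (hy : y ∈ U) (v : EuclideanSpace ℂ (Fin n)) :
    ⟪fderiv ℝ (Gvec δ) y v, Gvec δ y⟫ = 0 := by
  have hconst : (fun x => ⟪Gvec δ x, Gvec δ x⟫) =ᶠ[nhds y] (fun _ => (1:ℝ)) := by
    filter_upwards [hU.eventually_mem hy] with x hx
    rw [real_inner_self_eq_norm_sq, Gvec, rieszCLM_norm, hnorm x hx]
    norm_num
  have hF := HasFDerivAt.inner ℝ (Gvec_hasFDerivAt hU hδ hy) (Gvec_hasFDerivAt hU hδ hy)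
  have h0 : HasFDerivAt (fun x => ⟪Gvec δ x, Gvec δ x⟫)
      (0 : EuclideanSpace ℂ (Fin n) →L[ℝ] ℝ) y :=
    (hasFDerivAt_const (1:ℝ) y).congr_of_eventuallyEq hconst
  have := hF.unique h0
  have happ := congrFun (congrArg DFunLike.coe this) v
  simp only [ContinuousLinearMap.comp_apply, ContinuousLinearMap.prod_apply,
    fderivInnerCLM_apply, ContinuousLinearMap.zero_apply] at happ
  have hc : ⟪Gvec δ y, fderiv ℝ (Gvec δ) y v⟫ = ⟪fderiv ℝ (Gvec δ) y v, Gvec δ y⟫ :=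
    real_inner_comm _ _
  linarith [happ, hc]

private lemma Gvec_I3 (hU : IsOpen U) (hδ : ContDiffOn ℝ (⊤ : ℕ∞) δ U)
    (hnorm : ∀ x ∈ U, ‖fderiv ℝ δ x‖ = 1)
    {y : EuclideanSpace ℂ (Fin n)} (hy : y ∈ U) (d v : EuclideanSpace ℂ (Fin n)) :
    ⟪fderiv ℝ (fderiv ℝ (Gvec δ)) y d v, Gvec δ y⟫
      = -⟪fderiv ℝ (Gvec δ) y v, fderiv ℝ (Gvec δ) y d⟫ := by
  have hconst : (fun x => ⟪fderiv ℝ (Gvec δ) x v, Gvec δ x⟫) =ᶠ[nhds y] (fun _ => (0:ℝ)) := by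
    filter_upwards [hU.eventually_mem hy] with x hx
    exact Gvec_ker hU hδ hnorm hx v
  have hF := HasFDerivAt.inner ℝ (hessApply_hasFDerivAt hU hδ hy v) (Gvec_hasFDerivAt hU hδ hy)
  have h0 : HasFDerivAt (fun x => ⟪fderiv ℝ (Gvec δ) x v, Gvec δ x⟫)
      (0 : EuclideanSpace ℂ (Fin n) →L[ℝ] ℝ) y :=
    (hasFDerivAt_const (0:ℝ) y).congr_of_eventuallyEq hconst
  have := hF.unique h0
  have happ := congrFun (congrArg DFunLike.coe this) d
  simp only [ContinuousLinearMap.comp_apply, ContinuousLinearMap.prod_apply,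
    fderivInnerCLM_apply, ContinuousLinearMap.zero_apply, ContinuousLinearMap.flip_apply] at happ
  linarith [happ]

private lemma Gvec_K7 (hU : IsOpen U) (hδ : ContDiffOn ℝ (⊤ : ℕ∞) δ U)
    (hnorm : ∀ x ∈ U, ‖fderiv ℝ δ x‖ = 1)
    {y : EuclideanSpace ℂ (Fin n)} (hy : y ∈ U) (W : EuclideanSpace ℂ (Fin n)) :
    ⟪fderiv ℝ (fderiv ℝ (Gvec δ)) y (Gvec δ y) W, W⟫
      = -⟪fderiv ℝ (Gvec δ) y W, fderiv ℝ (Gvec δ) y W⟫ := by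
  rw [Gvec_sym12 hU hδ hy (Gvec δ y) W, Gvec_sym23 hU hδ hy W (Gvec δ y) W]
  exact Gvec_I3 hU hδ hnorm hy W W

private lemma cHess_re_eq (hU : IsOpen U)
    (hδ : ContDiffOn ℝ (⊤ : ℕ∞) δ U) {y : EuclideanSpace ℂ (Fin n)} (hy : y ∈ U)
    (V : EuclideanSpace ℂ (Fin n)) :
    (cHess (fun w => ((δ w : ℝ) : ℂ)) y V V).re
      = (fderiv ℝ (fderiv ℝ δ) y V V
        + fderiv ℝ (fderiv ℝ δ) y (Complex.I • V) (Complex.I • V)) / 4 := by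
  set g := fderiv ℝ δ with hgdef
  have hdiff : ∀ x ∈ U, DifferentiableAt ℝ δ x := fun x hx =>
    (hδ.differentiableOn (by norm_num)).differentiableAt (hU.mem_nhds hx)
  have hgc : ContDiffOn ℝ (⊤ : ℕ∞) g U := fderiv_cdo hU hδ
  have hgdiff : DifferentiableAt ℝ g y :=
    (hgc.differentiableOn (by norm_num)).differentiableAt (hU.mem_nhds hy)
  set g2 := fderiv ℝ g y with hg2def
  have hg2 : HasFDerivAt g g2 y := hgdiff.hasFDerivAt
  have happ : ∀ w : EuclideanSpace ℂ (Fin n),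
      HasFDerivAt (fun x => g x w) (g2.flip w) y := by
    intro w
    have := hg2.clm_apply (hasFDerivAt_const w y)
    simpa using this
  have hf' : ∀ x ∈ U, fderiv ℝ (fun w => ((δ w : ℝ) : ℂ)) x = Complex.ofRealCLM.comp (g x) := by
    intro x hx
    exact (Complex.ofRealCLM.hasFDerivAt.comp x (hdiff x hx).hasFDerivAt).fderiv
  have hev : ∀ w : EuclideanSpace ℂ (Fin n),
      (fun x => dbarDir (fun w' => ((δ w' : ℝ) : ℂ)) x w) =ᶠ[nhds y]
      (fun x => (1/2 : ℂ) * (((g x w : ℝ) : ℂ) + Complex.I * ((g x (Complex.I • w) : ℝ) : ℂ))) := by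
    intro w
    filter_upwards [hU.eventually_mem hy] with x hx
    rw [dbarDir, hf' x hx]
    simp
  have hnice : ∀ w : EuclideanSpace ℂ (Fin n), HasFDerivAt
      (fun x => (1/2 : ℂ) * (((g x w : ℝ) : ℂ) + Complex.I * ((g x (Complex.I • w) : ℝ) : ℂ)))
      ((1/2 : ℂ) • (Complex.ofRealCLM.comp (g2.flip w)
        + Complex.I • Complex.ofRealCLM.comp (g2.flip (Complex.I • w)))) y := by
    intro w
    have h1 := Complex.ofRealCLM.hasFDerivAt.comp y (happ w)
    have h2 := (Complex.ofRealCLM.hasFDerivAt.comp y (happ (Complex.I • w))).const_mul Complex.I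
    have h3 := (h1.add h2).const_mul (1/2 : ℂ)
    exact h3
  have hkey : ∀ w : EuclideanSpace ℂ (Fin n), ∀ v,
      fderiv ℝ (fun x => dbarDir (fun w' => ((δ w' : ℝ) : ℂ)) x w) y v
        = (1/2 : ℂ) * (((g2 v w : ℝ) : ℂ) + Complex.I * ((g2 v (Complex.I • w) : ℝ) : ℂ)) := by
    intro w v
    rw [(hev w).fderiv_eq, (hnice w).fderiv]
    simp
    ring
  rw [cHess, dDir, hkey V V, hkey V (Complex.I • V)]
  simp [Complex.mul_re]
  ring

end Aux


/-- If the complex Hessian of `δ` is nonnegative on the real tangent space at each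
boundary point, then `δ` is plurisubharmonic on `U ∩ Ω` for some neighborhood `U` of `bΩ`. -/
theorem signed_distance_psh_inside {n : ℕ} (Ω : Set (EuclideanSpace ℂ (Fin n)))
    (hopen : IsOpen Ω) (hconn : IsConnected Ω) (hbdd : Bornology.IsBounded Ω)
    (hsmooth : HasSmoothBoundary Ω)
    (hpsh : ∀ z ∈ frontier Ω, ∀ V : EuclideanSpace ℂ (Fin n),
      fderiv ℝ (sdist Ω) z V = 0 → 0 ≤ (cHess (fun w => ((sdist Ω w : ℝ) : ℂ)) z V V).re) :
    ∃ U : Set (EuclideanSpace ℂ (Fin n)), IsOpen U ∧ frontier Ω ⊆ U ∧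
      ∀ z ∈ U ∩ Ω, ∀ V : EuclideanSpace ℂ (Fin n), 0 ≤ (cHess (fun w => ((sdist Ω w : ℝ) : ℂ)) z V V).re := by
  obtain ⟨U', hU'open, hU'sub, hδsm, hδnorm⟩ := hsmooth
  rcases eq_empty_or_nonempty (frontier Ω) with hfr | hfr
  · exact ⟨∅, isOpen_empty, by simp [hfr], by simp⟩
  have hrad : ∀ p ∈ frontier Ω, ∃ r, 0 < r ∧ ball p (3*r) ⊆ U' := by
    intro p hp
    obtain ⟨ε, hε, hball⟩ := Metric.isOpen_iff.mp hU'open p (hU'sub hp)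
    refine ⟨ε/3, by linarith, fun x hx => hball ?_⟩
    rw [mem_ball] at hx ⊢; linarith
  choose! r hrpos hrball using hrad
  refine ⟨⋃ p ∈ frontier Ω, ball p (r p), isOpen_biUnion (fun _ _ => isOpen_ball), ?_, ?_⟩
  · intro p hp; exact mem_biUnion hp (mem_ball_self (hrpos p hp))
  rintro z ⟨hzU, hzΩ⟩ V
  obtain ⟨p₀, hp₀, hzb⟩ := mem_iUnion₂.mp hzU
  set δ := sdist Ω with hδdef
  -- frontier is compact
  have hfc : IsCompact (frontier Ω) :=
    isCompact_of_isClosed_isBounded isClosed_frontier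
      (hbdd.closure.subset frontier_subset_closure)
  set t₀ := infDist z (frontier Ω) with ht₀def
  obtain ⟨p, hpfr, hpd⟩ := hfc.exists_infDist_eq_dist hfr z
  have hznf : z ∉ frontier Ω := by
    intro h
    rw [hopen.frontier_eq] at h
    exact h.2 hzΩ
  have ht₀pos : 0 < t₀ := (isClosed_frontier.notMem_iff_infDist_pos hfr).mp hznf
  have ht₀lt : t₀ < r p₀ := lt_of_le_of_lt (infDist_le_dist_of_mem hp₀) (mem_ball.mp hzb)
  set u : EuclideanSpace ℂ (Fin n) := (t₀)⁻¹ • (p - z) with hudef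
  have hpz : ‖p - z‖ = t₀ := by
    rw [← dist_eq_norm, dist_comm]; exact hpd.symm
  have hu : ‖u‖ = 1 := by
    rw [hudef, norm_smul, hpz, norm_inv, Real.norm_of_nonneg ht₀pos.le,
      inv_mul_cancel₀ ht₀pos.ne']
  set γ : ℝ → EuclideanSpace ℂ (Fin n) := fun t => z + t • u with hγdef
  have hγ0 : γ 0 = z := by simp [hγdef]
  have hγt₀ : γ t₀ = p := by
    simp only [hγdef, hudef, smul_smul, mul_inv_cancel₀ ht₀pos.ne', one_smul]
    abel
  have hseg : ∀ t ∈ Icc (0:ℝ) t₀, γ t ∈ U' := by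
    intro t ht
    apply hrball p₀ hp₀
    rw [mem_ball]
    have h1 : dist (γ t) z = t := by
      rw [hγdef]
      simp only [dist_eq_norm, add_sub_cancel_left, norm_smul, hu, mul_one]
      exact Real.norm_of_nonneg ht.1
    calc dist (γ t) p₀ ≤ dist (γ t) z + dist z p₀ := dist_triangle _ _ _
      _ < t + r p₀ := by have := mem_ball.mp hzb; linarith [this]
      _ < 3 * r p₀ := by have := hrpos p₀ hp₀; linarith [ht.2, ht₀lt]
  have hzU' : z ∈ U' := by rw [← hγ0]; exact hseg 0 ⟨le_refl _, ht₀pos.le⟩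
  have hpU' : p ∈ U' := by rw [← hγt₀]; exact hseg t₀ ⟨ht₀pos.le, le_refl _⟩
  -- δ values at endpoints
  have hδz : δ z = -t₀ := by rw [hδdef, sdist, if_pos hzΩ]
  have hδp : δ p = 0 := by
    rw [hδdef, sdist]
    split <;> simp [infDist_zero_of_mem hpfr]
  -- curve derivative
  have hγd : ∀ t : ℝ, HasDerivAt γ u t := by
    intro t
    have h := ((hasDerivAt_id t).smul_const u).const_add z
    rw [one_smul] at h
    exact h
  have hgip : ∀ x w, fderiv ℝ δ x w = ⟪Gvec δ x, w⟫ := fun x w => (rieszCLM_inner _ _).symm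
  have hδdiff : ∀ x ∈ U', DifferentiableAt ℝ δ x := fun x hx =>
    (hδsm.differentiableOn (by norm_num)).differentiableAt (hU'open.mem_nhds hx)
  have hGn : ∀ x ∈ U', ‖Gvec δ x‖ = 1 := fun x hx => by
    rw [Gvec, rieszCLM_norm]; exact hδnorm x hx
  have hφd : ∀ t ∈ Icc (0:ℝ) t₀, HasDerivAt (fun s => δ (γ s)) (⟪Gvec δ (γ t), u⟫) t := by
    intro t ht
    have := (hδdiff _ (hseg t ht)).hasFDerivAt.comp_hasDerivAt t (hγd t)
    rw [hgip] at this
    exact this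
  -- ψ is monotone with equal endpoints
  set ψ : ℝ → ℝ := fun t => t - δ (γ t) with hψdef
  have hψd : ∀ t ∈ Icc (0:ℝ) t₀, HasDerivAt ψ (1 - ⟪Gvec δ (γ t), u⟫) t := by
    intro t ht
    exact (hasDerivAt_id t).sub (hφd t ht)
  have hinle : ∀ t ∈ Icc (0:ℝ) t₀, ⟪Gvec δ (γ t), u⟫ ≤ 1 := by
    intro t ht
    calc ⟪Gvec δ (γ t), u⟫ ≤ ‖Gvec δ (γ t)‖ * ‖u‖ := real_inner_le_norm _ _
      _ = 1 := by rw [hGn _ (hseg t ht), hu, one_mul]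
  have hψmono : MonotoneOn ψ (Icc 0 t₀) := by
    apply monotoneOn_of_deriv_nonneg (convex_Icc 0 t₀)
    · intro t ht
      exact (hψd t ht).continuousAt.continuousWithinAt
    · intro t ht
      rw [interior_Icc] at ht
      exact (hψd t (Ioo_subset_Icc_self ht)).differentiableAt.differentiableWithinAt
    · intro t ht
      rw [interior_Icc] at ht
      rw [(hψd t (Ioo_subset_Icc_self ht)).deriv]
      linarith [hinle t (Ioo_subset_Icc_self ht)]
  have hψ0 : ψ 0 = t₀ := by simp [hψdef, hγ0, hδz]
  have hψt₀ : ψ t₀ = t₀ := by simp [hψdef, hγt₀, hδp]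
  have hψconst : ∀ t ∈ Icc (0:ℝ) t₀, δ (γ t) = t - t₀ := by
    intro t ht
    have h1 : ψ 0 ≤ ψ t := hψmono ⟨le_refl _, ht₀pos.le⟩ ht ht.1
    have h2 : ψ t ≤ ψ t₀ := hψmono ht ⟨ht₀pos.le, le_refl _⟩ ht.2
    rw [hψ0] at h1; rw [hψt₀] at h2
    have : ψ t = t₀ := le_antisymm h2 h1
    rw [hψdef] at this
    simp only at this
    linarith
  -- gradient equals u along the segment
  have hGu : ∀ t ∈ Icc (0:ℝ) t₀, Gvec δ (γ t) = u := by
    intro t ht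
    have h1 : ⟪Gvec δ (γ t), u⟫ = 1 := by
      have hφw : HasDerivWithinAt (fun s => δ (γ s)) (⟪Gvec δ (γ t), u⟫) (Icc 0 t₀) t :=
        (hφd t ht).hasDerivWithinAt
      have hlinw : HasDerivWithinAt (fun s => δ (γ s)) 1 (Icc 0 t₀) t := by
        have hl : HasDerivWithinAt (fun s : ℝ => s - t₀) 1 (Icc 0 t₀) t := by
          simpa using (hasDerivWithinAt_id t (Icc 0 t₀)).sub_const t₀
        exact hl.congr (fun s hs => hψconst s hs) (hψconst t ht)
      have hud := uniqueDiffOn_Icc ht₀pos t ht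
      rw [← hφw.derivWithin hud, hlinw.derivWithin hud]
    have hnz : ‖Gvec δ (γ t) - u‖ ^ 2 = 0 := by
      rw [norm_sub_pow_two_real, hGn _ (hseg t ht), hu, h1]
      norm_num
    have := pow_eq_zero_iff (n := 2) (by norm_num) |>.mp hnz
    rw [norm_eq_zero] at this
    exact sub_eq_zero.mp this
  -- the function F along the segment
  set F : ℝ → ℝ := fun t => ⟪fderiv ℝ (Gvec δ) (γ t) V, V⟫
    + ⟪fderiv ℝ (Gvec δ) (γ t) (Complex.I • V), Complex.I • V⟫ with hFdef
  have hFd : ∀ t ∈ Icc (0:ℝ) t₀, HasDerivAt F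
      (⟪fderiv ℝ (fderiv ℝ (Gvec δ)) (γ t) u V, V⟫
        + ⟪fderiv ℝ (fderiv ℝ (Gvec δ)) (γ t) u (Complex.I • V), Complex.I • V⟫) t := by
    intro t ht
    have h1 := (innerHess_hasFDerivAt hU'open hδsm (hseg t ht) V V).comp_hasDerivAt t (hγd t)
    have h2 := (innerHess_hasFDerivAt hU'open hδsm (hseg t ht) (Complex.I • V)
      (Complex.I • V)).comp_hasDerivAt t (hγd t)
    have h3 := h1.add h2
    exact h3
  have hFanti : AntitoneOn F (Icc 0 t₀) := by
    apply antitoneOn_of_deriv_nonpos (convex_Icc 0 t₀)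
    · intro t ht
      exact (hFd t ht).continuousAt.continuousWithinAt
    · intro t ht
      rw [interior_Icc] at ht
      exact (hFd t (Ioo_subset_Icc_self ht)).differentiableAt.differentiableWithinAt
    · intro t ht
      rw [interior_Icc] at ht
      have ht' := Ioo_subset_Icc_self ht
      rw [(hFd t ht').deriv]
      have hyU : γ t ∈ U' := hseg t ht'
      have hGeq : Gvec δ (γ t) = u := hGu t ht'
      rw [← hGeq, Gvec_K7 hU'open hδsm hδnorm hyU V,
        Gvec_K7 hU'open hδsm hδnorm hyU (Complex.I • V)]
      have n1 : (0:ℝ) ≤ ⟪fderiv ℝ (Gvec δ) (γ t) V, fderiv ℝ (Gvec δ) (γ t) V⟫ :=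
        real_inner_self_nonneg
      have n2 : (0:ℝ) ≤ ⟪fderiv ℝ (Gvec δ) (γ t) (Complex.I • V),
          fderiv ℝ (Gvec δ) (γ t) (Complex.I • V)⟫ := real_inner_self_nonneg
      linarith
  have hF0 : F t₀ ≤ F 0 := hFanti ⟨le_refl _, ht₀pos.le⟩ ⟨ht₀pos.le, le_refl _⟩ ht₀pos.le
  -- Step A at boundary point p
  have hGp : Gvec δ p = u := by rw [← hγt₀]; exact hGu t₀ ⟨ht₀pos.le, le_refl _⟩
  have hstep : 0 ≤ F t₀ := by
    simp only [hFdef, hγt₀]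
    apply stepA (fderiv ℝ (Gvec δ) p) u hu
    · exact fun a b => Gvec_sym hU'open hδsm hpU' a b
    · intro a
      rw [← hGp]
      exact Gvec_ker hU'open hδsm hδnorm hpU' a
    · intro W hW
      have hfd : fderiv ℝ δ p W = 0 := by
        rw [hgip, hGp]
        exact hW
      have h := hpsh p hpfr W hfd
      rw [cHess_re_eq hU'open hδsm hpU' W] at h
      rw [Gvec_bridge hU'open hδsm hpU' W W,
        Gvec_bridge hU'open hδsm hpU' (Complex.I • W) (Complex.I • W)]
      linarith
  -- conclude
  rw [cHess_re_eq hU'open hδsm hzU' V, ← Gvec_bridge hU'open hδsm hzU' V V,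
    ← Gvec_bridge hU'open hδsm hzU' (Complex.I • V) (Complex.I • V)]
  have : F 0 = ⟪fderiv ℝ (Gvec δ) z V, V⟫
      + ⟪fderiv ℝ (Gvec δ) z (Complex.I • V), Complex.I • V⟫ := by simp only [hFdef, hγ0]
  linarith [hF0, hstep, this.symm.le, this.le]
end
end
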